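/- Let Γ be a finite vertex-transitive graph with vertex set VΓ = {1, −1, …, m, −m} × [k] whose full automorphism group G = Aut(Γ) satisfies X^k ≤ G ≤ Y ≀ Sym(k), where X = {1} × Sym(m) and Y = ⟨τ⟩ × Sym(m) ≤ C2 ≀ Sym(m), with X^k in the base group; assume moreover that the pointwise stabiliser in G of the complement of D_1 equals X, where D_j = {1, −1, …, m, −m} × {j} and D = {D_1, …, D_k}. Then: (1) all induced subgraphs Γ[D_j] are mutually isomorphic, and Γ[D_1] is isomorphic to mK_2, K_m □ K_2, the complement of mK_2, or the complement of K_m □ K_2; (2) Γ ≅ Inf_{λ,κ}(Γ/X^k, D/X^k, m), where (λ,κ) = (1,0), (1,1), (0,1), (0,0) according as Γ[D_1] is isomorphic to mK_2, K_m □ K_2, complement of mK_2, complement of K_m □ K_2, respectively; and (3) the quotient graph Γ/X^k admits no transposition preserving the partition D/X^k as an automorphism. -/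

import Mathlib

open Equiv Pointwise

/-- A graph is vertex-transitive if its automorphism group is transitive on the
vertices. -/
def IsVertexTransitive {V : Type*} (Γ : SimpleGraph V) : Prop :=
  ∀ u v : V, ∃ e : Γ ≃g Γ, e u = v

/-- The motion of a graph: the least number of vertices moved by a non-identity
automorphism (i.e. the minimal degree of its automorphism group). -/
noncomputable def motion {V : Type*} [Fintype V] [DecidableEq V] (Γ : SimpleGraph V) : ℕ :=
  sInf {n | ∃ e : Γ ≃g Γ, (e.toEquiv : Equiv.Perm V) ≠ 1 ∧
    (Equiv.Perm.support (e.toEquiv : Equiv.Perm V)).card = n}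

/-- The element of the imprimitive wreath product determined by a function
`g : ι → Perm Δ` and a permutation `h` of the index set, acting on `Δ × ι` by
`(δ, i) ↦ (g i δ, h i)`. -/
def wreathPerm {Δ ι : Type*} (g : ι → Equiv.Perm Δ) (h : Equiv.Perm ι) :
    Equiv.Perm (Δ × ι) where
  toFun x := (g x.2 x.1, h x.2)
  invFun x := ((g (h⁻¹ x.2))⁻¹ x.1, h⁻¹ x.2)
  left_inv := by rintro ⟨d, i⟩; simp
  right_inv := by rintro ⟨d, i⟩; simp

/-- The imprimitive wreath product `Y ≀ H` of permutation groups, as a permutation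
group on `Δ × ι`.  (The defining set is already a subgroup, so taking the
subgroup closure does not change it.) -/
def wreathProduct {Δ ι : Type*} (Y : Subgroup (Equiv.Perm Δ))
    (H : Subgroup (Equiv.Perm ι)) : Subgroup (Equiv.Perm (Δ × ι)) :=
  Subgroup.closure {σ | ∃ (g : ι → Equiv.Perm Δ) (h : Equiv.Perm ι),
    (∀ i, g i ∈ Y) ∧ h ∈ H ∧ σ = wreathPerm g h}

/-- The copy `X^ι` of a power of `X` inside the base group of a wreath product,
as a permutation group on `Δ × ι`. -/
def basePower {Δ ι : Type*} (X : Subgroup (Equiv.Perm Δ)) :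
    Subgroup (Equiv.Perm (Δ × ι)) :=
  Subgroup.closure {σ | ∃ g : ι → Equiv.Perm Δ, (∀ i, g i ∈ X) ∧ σ = wreathPerm g 1}

/-- Transport of permutations along a bijection, as a group isomorphism. -/
def permMapEquiv {α β : Type*} (f : α ≃ β) : Equiv.Perm α ≃* Equiv.Perm β where
  toFun g := (f.symm.trans g).trans f
  invFun g := (f.trans g).trans f.symm
  left_inv g := by ext x; simp
  right_inv g := by ext x; simp
  map_mul' g₁ g₂ := by ext x; simp [Equiv.Perm.mul_apply]

/-- Transport of a permutation group along a bijection of the underlying sets.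
`mapPermGroup f G` is the permutation group on `β` corresponding to `G` under the
relabelling `f`; thus `G` and `mapPermGroup f G` are permutation isomorphic. -/
def mapPermGroup {α β : Type*} (f : α ≃ β) (G : Subgroup (Equiv.Perm α)) :
    Subgroup (Equiv.Perm β) :=
  Subgroup.map (permMapEquiv f).toMonoidHom G

/-- The subgroup of the permutations of `Δ × ι` fixing every point whose second
coordinate is different from `i0`. -/
def fixAway {Δ ι : Type*} (i0 : ι) : Subgroup (Equiv.Perm (Δ × ι)) where
  carrier := {σ | ∀ x : Δ × ι, x.2 ≠ i0 → σ x = x}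
  one_mem' := by intro x _; rfl
  mul_mem' := by
    intro a b ha hb x hx
    simp only [Set.mem_setOf_eq] at *
    rw [Equiv.Perm.mul_apply, hb x hx, ha x hx]
  inv_mem' := by
    intro a ha x hx
    apply a.injective
    simpa using (ha x hx).symm

/-- The copy of the group `X` acting on the fibre `Δ × {i0}` of `Δ × ι`, fixing
all other points. -/
def atCoord {Δ ι : Type*} [DecidableEq ι] (i0 : ι) (X : Subgroup (Equiv.Perm Δ)) :
    Subgroup (Equiv.Perm (Δ × ι)) :=
  Subgroup.closure {σ | ∃ g ∈ X, σ = wreathPerm (fun i => if i = i0 then g else 1) 1}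

/-- Condition (C) of Table 1: the pointwise stabiliser (inside `G'`) of all the points
whose second coordinate is different from `i0` is permutation isomorphic to `X`
(acting on the fibre above `i0`). -/
def condC {Δ : Type*} {ι : Type*} [DecidableEq ι] (G' : Subgroup (Equiv.Perm (Δ × ι)))
    (i0 : ι) (X : Subgroup (Equiv.Perm Δ)) : Prop :=
  ∃ c : Δ ≃ Δ, G' ⊓ fixAway i0 = atCoord i0 (mapPermGroup c X)

/-- The full wreath product `C₂ ≀ Sym(m)` acting on `Fin 2 × Fin m` (the set
`{1, -1, …, m, -m}`), where the `i`-th base coordinate swaps `(0,i)` and `(1,i)`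
and `Sym(m)` permutes the pairs. -/
def fullC2Wreath (m : ℕ) : Subgroup (Equiv.Perm (Fin 2 × Fin m)) :=
  Subgroup.closure {σ | ∃ (g : Fin m → Equiv.Perm (Fin 2)) (h : Equiv.Perm (Fin m)),
    σ = wreathPerm g h}

/-- The subgroup `{1} × Sym(m)` of `C₂ ≀ Sym(m)`. -/
def symPart (m : ℕ) : Subgroup (Equiv.Perm (Fin 2 × Fin m)) :=
  Subgroup.closure {σ | ∃ h : Equiv.Perm (Fin m), σ = wreathPerm (fun _ => 1) h}

/-- The superflip `τ`: the base-group element swapping `i` and `-i` for every `i`. -/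
def superflip (m : ℕ) : Equiv.Perm (Fin 2 × Fin m) :=
  wreathPerm (fun _ => Equiv.swap 0 1) 1

/-- The subgroup `⟨τ⟩ × Sym(m)` of `C₂ ≀ Sym(m)`. -/
def flipSym (m : ℕ) : Subgroup (Equiv.Perm (Fin 2 × Fin m)) :=
  Subgroup.zpowers (superflip m) ⊔ symPart m

/-- The augmentation subgroup `(C₂^m)⁺ × {1}` of the base group of `C₂ ≀ Sym(m)`:
tuples with an even number of non-trivial entries. -/
def evenBase (m : ℕ) : Subgroup (Equiv.Perm (Fin 2 × Fin m)) :=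
  Subgroup.closure {σ | ∃ g : Fin m → Equiv.Perm (Fin 2),
    Even (Finset.univ.filter (fun i => g i ≠ 1)).card ∧ σ = wreathPerm g 1}

/-- The subgroup `(C₂^m)⁺ ⋊ Sym(m)` of `C₂ ≀ Sym(m)`. -/
def evenWreath (m : ℕ) : Subgroup (Equiv.Perm (Fin 2 × Fin m)) :=
  evenBase m ⊔ symPart m

/-- The full automorphism group of a graph, as a subgroup of the symmetric group on
its vertex set. -/
def autGroup {V : Type*} (Γ : SimpleGraph V) : Subgroup (Equiv.Perm V) where
  carrier := {σ | ∀ u v : V, Γ.Adj (σ u) (σ v) ↔ Γ.Adj u v}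
  one_mem' := by intro u v; rfl
  mul_mem' := by
    intro a b ha hb u v
    simp only [Set.mem_setOf_eq] at *
    rw [Equiv.Perm.mul_apply, Equiv.Perm.mul_apply, ha, hb]
  inv_mem' := by
    intro a ha u v
    simp only [Set.mem_setOf_eq] at *
    have h := ha (a⁻¹ u) (a⁻¹ v)
    simp at h
    exact h.symm

/-- A partition of the ground set into sets of size two. -/
def IsPairPartition {Ω : Type*} (P : Set (Set Ω)) : Prop :=
  (∀ B ∈ P, B.ncard = 2) ∧ ∀ ω : Ω, ∃! B, B ∈ P ∧ ω ∈ B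

/-- The graph `Inf_{λ,κ}(Σ, P, m)`: the vertex set is `VΣ × {1, …, m}` and
`(α,i) ∼ (β,j)` iff `{α,β} ∉ P` and `α ∼ β` in `Σ`; or `{α,β} ∈ P`, `λ = 1` and
`i = j`; or `{α,β} ∈ P`, `λ = 0` and `i ≠ j`; or `α = β` and `κ = 1` (and the two
vertices are distinct). -/
def infGraph {Ω : Type*} (Sg : SimpleGraph Ω) (P : Set (Set Ω)) (m : ℕ)
    (lam kap : ZMod 2) : SimpleGraph (Ω × Fin m) :=
  SimpleGraph.fromRel (fun x y =>
    (({x.1, y.1} : Set Ω) ∉ P ∧ Sg.Adj x.1 y.1) ∨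
    (({x.1, y.1} : Set Ω) ∈ P ∧ lam = 1 ∧ x.2 = y.2) ∨
    (({x.1, y.1} : Set Ω) ∈ P ∧ lam = 0 ∧ x.2 ≠ y.2) ∨
    (x.1 = y.1 ∧ kap = 1))

/-- A bijection of the vertices preserves the partition `P`. -/
def PreservesPartition {Ω : Type*} (P : Set (Set Ω)) (e : Ω ≃ Ω) : Prop :=
  ∀ B : Set Ω, B ∈ P ↔ (e '' B) ∈ P

/-- The group `Aut_P(Σ)` of automorphisms of `Σ` preserving the partition `P` acts
transitively on the vertices. -/
def IsPTransitive {Ω : Type*} (Sg : SimpleGraph Ω) (P : Set (Set Ω)) : Prop :=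
  ∀ u v : Ω, ∃ e : Sg ≃g Sg, PreservesPartition P e.toEquiv ∧ e u = v

/-- The 5-cycle `C₅`, as a graph on `ZMod 5`. -/
def C5 : SimpleGraph (ZMod 5) := SimpleGraph.fromRel (fun x y => x - y = 1)

/-- The perfect matching `m K₂` on the vertex set `Fin 2 × Fin m`. -/
def matching (m : ℕ) : SimpleGraph (Fin 2 × Fin m) :=
  SimpleGraph.fromRel (fun x y => x.2 = y.2 ∧ x.1 ≠ y.1)

/-- The Cartesian product `K_m □ K₂` on the vertex set `Fin 2 × Fin m`. -/
def prism (m : ℕ) : SimpleGraph (Fin 2 × Fin m) :=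
  SimpleGraph.fromRel (fun x y => (x.2 = y.2 ∧ x.1 ≠ y.1) ∨ (x.1 = y.1 ∧ x.2 ≠ y.2))

/-- The complete bipartite graph `K_{m,m}` on the vertex set `Fin 2 × Fin m`. -/
def completeBip (m : ℕ) : SimpleGraph (Fin 2 × Fin m) :=
  SimpleGraph.fromRel (fun x y => x.1 ≠ y.1)

/-- The quotient graph `Γ/H` of a graph by a group of automorphisms: the vertices
are the `H`-orbits, two distinct orbits being adjacent whenever some vertex of one is
adjacent in `Γ` to some vertex of the other. -/
def quotGraph {V : Type*} (Γ : SimpleGraph V) (H : Subgroup (Equiv.Perm V)) :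
    SimpleGraph (Quotient (MulAction.orbitRel H V)) :=
  SimpleGraph.fromRel (fun A B => ∃ u v : V,
    Quotient.mk (MulAction.orbitRel H V) u = A ∧
    Quotient.mk (MulAction.orbitRel H V) v = B ∧ Γ.Adj u v)

/-- The block `D_j = {1, -1, …, m, -m} × {j}` of the vertex set. -/
def Dblock (m k : ℕ) (j : Fin k) : Set ((Fin 2 × Fin m) × Fin k) := {v | v.2 = j}

/-- The partition `𝓓/X^k` of the vertices of the quotient graph: the `j`-th block
consists of the orbits of the vertices with second coordinate `j`. -/
def quotPart (m k : ℕ) (H : Subgroup (Equiv.Perm ((Fin 2 × Fin m) × Fin k))) :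
    Set (Set (Quotient (MulAction.orbitRel H ((Fin 2 × Fin m) × Fin k)))) :=
  {S | ∃ j : Fin k, S = {q | ∃ w : Fin 2 × Fin m,
    q = Quotient.mk (MulAction.orbitRel H ((Fin 2 × Fin m) × Fin k)) (w, j)}}

section Infra

variable {Δ ι : Type*}

@[simp] lemma wreathPerm_apply (g : ι → Equiv.Perm Δ) (h : Equiv.Perm ι) (x : Δ × ι) :
    wreathPerm g h x = (g x.2 x.1, h x.2) := rfl

lemma wreathPerm_mul (g g' : ι → Equiv.Perm Δ) (h h' : Equiv.Perm ι) :
    wreathPerm g h * wreathPerm g' h' = wreathPerm (fun i => g (h' i) * g' i) (h * h') := by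
  ext x <;> rfl

lemma wreathPerm_one : (wreathPerm (fun _ : ι => (1 : Equiv.Perm Δ)) 1) = 1 := by
  ext x <;> rfl

lemma wreathPerm_inv (g : ι → Equiv.Perm Δ) (h : Equiv.Perm ι) :
    (wreathPerm g h)⁻¹ = wreathPerm (fun i => (g (h⁻¹ i))⁻¹) h⁻¹ := by
  ext x <;> rfl

/-- Generic lemma: a closure of a subgroup-like set is the set itself. -/
lemma mem_closure_of_subgroup_set {G : Type*} [Group G] (S : Set G)
    (h1 : (1 : G) ∈ S) (hmul : ∀ a b, a ∈ S → b ∈ S → a * b ∈ S)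
    (hinv : ∀ a, a ∈ S → a⁻¹ ∈ S) (σ : G) : σ ∈ Subgroup.closure S ↔ σ ∈ S := by
  let K : Subgroup G :=
    { carrier := S
      one_mem' := h1
      mul_mem' := fun {a b} ha hb => hmul a b ha hb
      inv_mem' := fun {a} ha => hinv a ha }
  have : Subgroup.closure S = K := Subgroup.closure_eq K
  rw [this]; rfl

lemma mem_symPart {m : ℕ} (σ : Equiv.Perm (Fin 2 × Fin m)) :
    σ ∈ symPart m ↔ ∃ h : Equiv.Perm (Fin m), σ = wreathPerm (fun _ => 1) h := by
  apply mem_closure_of_subgroup_set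
  · exact ⟨1, wreathPerm_one.symm⟩
  · rintro a b ⟨h, rfl⟩ ⟨h', rfl⟩
    exact ⟨h * h', by ext x <;> rfl⟩
  · rintro a ⟨h, rfl⟩
    exact ⟨h⁻¹, by ext x <;> rfl⟩

lemma mem_basePower {X : Subgroup (Equiv.Perm Δ)} (σ : Equiv.Perm (Δ × ι)) :
    σ ∈ (basePower X : Subgroup (Equiv.Perm (Δ × ι))) ↔
      ∃ g : ι → Equiv.Perm Δ, (∀ i, g i ∈ X) ∧ σ = wreathPerm g 1 := by
  apply mem_closure_of_subgroup_set
  · exact ⟨fun _ => 1, fun _ => one_mem X, wreathPerm_one.symm⟩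
  · rintro a b ⟨g, hg, rfl⟩ ⟨g', hg', rfl⟩
    refine ⟨fun i => g i * g' i, fun i => mul_mem (hg i) (hg' i), ?_⟩
    ext x <;> rfl
  · rintro a ⟨g, hg, rfl⟩
    refine ⟨fun i => (g i)⁻¹, fun i => inv_mem (hg i), ?_⟩
    ext x <;> rfl
end Infra
section Infra2

variable {Δ ι : Type*}

lemma mem_wreathProduct {Y : Subgroup (Equiv.Perm Δ)} {H : Subgroup (Equiv.Perm ι)}
    (σ : Equiv.Perm (Δ × ι)) :
    σ ∈ wreathProduct Y H ↔ ∃ (g : ι → Equiv.Perm Δ) (h : Equiv.Perm ι),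
      (∀ i, g i ∈ Y) ∧ h ∈ H ∧ σ = wreathPerm g h := by
  apply mem_closure_of_subgroup_set
  · exact ⟨fun _ => 1, 1, fun _ => one_mem Y, one_mem H, wreathPerm_one.symm⟩
  · rintro a b ⟨g, h, hg, hh, rfl⟩ ⟨g', h', hg', hh', rfl⟩
    exact ⟨fun i => g (h' i) * g' i, h * h',
      fun i => mul_mem (hg _) (hg' _), mul_mem hh hh', by ext x <;> rfl⟩
  · rintro a ⟨g, h, hg, hh, rfl⟩
    exact ⟨fun i => (g (h⁻¹ i))⁻¹, h⁻¹, fun i => inv_mem (hg _), inv_mem hh,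
      by ext x <;> rfl⟩

lemma mem_atCoord [DecidableEq ι] {X : Subgroup (Equiv.Perm Δ)} {i0 : ι}
    (σ : Equiv.Perm (Δ × ι)) :
    σ ∈ atCoord i0 X ↔ ∃ g ∈ X, σ = wreathPerm (fun i => if i = i0 then g else 1) 1 := by
  apply mem_closure_of_subgroup_set
  · refine ⟨1, one_mem X, ?_⟩
    ext x <;> by_cases hx : x.2 = i0 <;> simp [hx, wreathPerm]
  · rintro a b ⟨g, hg, rfl⟩ ⟨g', hg', rfl⟩
    refine ⟨g * g', mul_mem hg hg', ?_⟩
    ext x <;> by_cases hx : x.2 = i0 <;>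
      simp [hx, wreathPerm, Equiv.Perm.mul_apply]
  · rintro a ⟨g, hg, rfl⟩
    refine ⟨g⁻¹, inv_mem hg, ?_⟩
    rw [wreathPerm_inv]
    congr 1
    funext i
    by_cases hx : i = i0 <;> simp [hx]

lemma perm2_eq_one_or_swap (c : Equiv.Perm (Fin 2)) : c = 1 ∨ c = Equiv.swap 0 1 := by
  revert c; decide

lemma perm2_eq_swap_of_ne (c : Equiv.Perm (Fin 2)) (h : c 0 ≠ 0) : c = Equiv.swap 0 1 := by
  revert c; decide

lemma perm2_eq_one_of_eq (c : Equiv.Perm (Fin 2)) (h : c 0 = 0) : c = 1 := by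
  revert c; decide

lemma mem_flipSym {m : ℕ} (σ : Equiv.Perm (Fin 2 × Fin m)) :
    σ ∈ flipSym m ↔ ∃ (c : Equiv.Perm (Fin 2)) (h : Equiv.Perm (Fin m)),
      σ = wreathPerm (fun _ => c) h := by
  constructor
  · intro hσ
    let K : Subgroup (Equiv.Perm (Fin 2 × Fin m)) :=
      { carrier := {σ | ∃ (c : Equiv.Perm (Fin 2)) (h : Equiv.Perm (Fin m)),
          σ = wreathPerm (fun _ => c) h}
        one_mem' := ⟨1, 1, wreathPerm_one.symm⟩
        mul_mem' := by
          rintro a b ⟨c, h, rfl⟩ ⟨c', h', rfl⟩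
          exact ⟨c * c', h * h', by ext x <;> rfl⟩
        inv_mem' := by
          rintro a ⟨c, h, rfl⟩
          exact ⟨c⁻¹, h⁻¹, by ext x <;> rfl⟩ }
    have hK : flipSym m ≤ K := by
      rw [flipSym]
      apply sup_le
      · rw [Subgroup.zpowers_le]
        exact ⟨Equiv.swap 0 1, 1, rfl⟩
      · intro x hx
        obtain ⟨h, rfl⟩ := (mem_symPart x).mp hx
        exact ⟨1, h, rfl⟩
    exact hK hσ
  · rintro ⟨c, h, rfl⟩
    have hsplit : wreathPerm (fun _ : Fin m => c) h =
        wreathPerm (fun _ : Fin m => c) 1 * wreathPerm (fun _ => (1 : Equiv.Perm (Fin 2))) h := by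
      ext x <;> rfl
    rw [hsplit]
    apply mul_mem
    · rcases perm2_eq_one_or_swap c with rfl | rfl
      · rw [wreathPerm_one]; exact one_mem _
      · exact Subgroup.mem_sup_left (Subgroup.mem_zpowers _)
    · exact Subgroup.mem_sup_right (Subgroup.subset_closure ⟨h, rfl⟩)

end Infra2
section Graph1

variable {m k : ℕ} {Γ : SimpleGraph ((Fin 2 × Fin m) × Fin k)}

lemma mem_autGroup_iff (σ : Equiv.Perm ((Fin 2 × Fin m) × Fin k)) :
    σ ∈ autGroup Γ ↔ ∀ u v, Γ.Adj (σ u) (σ v) ↔ Γ.Adj u v := Iff.rfl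

lemma iso_mem_autGroup (e : Γ ≃g Γ) : (e.toEquiv : Equiv.Perm _) ∈ autGroup Γ :=
  fun _ _ => e.map_rel_iff

/-- Column invariance: applying an arbitrary permutation of the columns in each block
is an automorphism (consequence of `X^k ≤ Aut Γ`). -/
lemma adj_cols (hlow : basePower (symPart m) ≤ autGroup Γ) (s : Fin k → Equiv.Perm (Fin m))
    (a : Fin 2) (i : Fin m) (j : Fin k) (b : Fin 2) (i' : Fin m) (j' : Fin k) :
    Γ.Adj ((a, s j i), j) ((b, s j' i'), j') ↔ Γ.Adj ((a, i), j) ((b, i'), j') := by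
  have hmem : wreathPerm (fun l => wreathPerm (fun _ => (1 : Equiv.Perm (Fin 2))) (s l)) 1
      ∈ basePower (symPart m) :=
    (mem_basePower _).mpr ⟨_, fun l => (mem_symPart _).mpr ⟨s l, rfl⟩, rfl⟩
  exact hlow hmem ((a, i), j) ((b, i'), j')

lemma exists_perm_two {m : ℕ} {i i' i2 i2' : Fin m} (h : i ≠ i') (h2 : i2 ≠ i2') :
    ∃ s : Equiv.Perm (Fin m), s i = i2 ∧ s i' = i2' := by
  refine ⟨(Equiv.swap (Equiv.swap i i2 i') i2') * (Equiv.swap i i2), ?_, ?_⟩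
  · rw [Equiv.Perm.mul_apply, Equiv.swap_apply_left]
    apply Equiv.swap_apply_of_ne_of_ne
    · intro hc
      apply h
      apply (Equiv.swap i i2).injective
      rw [Equiv.swap_apply_left]
      exact hc
    · exact h2
  · rw [Equiv.Perm.mul_apply, Equiv.swap_apply_left]

/-- Within one block, adjacency only depends on the rows and on whether the columns
are equal. -/
lemma adj_cols2 (hlow : basePower (symPart m) ≤ autGroup Γ)
    {i i' i2 i2' : Fin m} (h : i ≠ i') (h2 : i2 ≠ i2') (a b : Fin 2) (j : Fin k) :
    Γ.Adj ((a, i), j) ((b, i'), j) ↔ Γ.Adj ((a, i2), j) ((b, i2'), j) := by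
  obtain ⟨s, hs1, hs2⟩ := exists_perm_two h h2
  have := adj_cols hlow (fun _ => s) a i j b i' j
  rw [hs1, hs2] at this
  exact this.symm

lemma adj_swap_col (hlow : basePower (symPart m) ≤ autGroup Γ)
    (i i2 : Fin m) (a b : Fin 2) (j : Fin k) :
    Γ.Adj ((a, i), j) ((b, i), j) ↔ Γ.Adj ((a, i2), j) ((b, i2), j) := by
  have := adj_cols hlow (fun _ => Equiv.swap i i2) a i j b i j
  rw [Equiv.swap_apply_left] at this
  exact this.symm

/-- Between two distinct blocks, adjacency only depends on the rows. -/
lemma adj_cross_cols (hlow : basePower (symPart m) ≤ autGroup Γ)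
    {j j' : Fin k} (hjj : j ≠ j') (i i' i2 i2' : Fin m) (a b : Fin 2) :
    Γ.Adj ((a, i), j) ((b, i'), j') ↔ Γ.Adj ((a, i2), j) ((b, i2'), j') := by
  have key := adj_cols hlow
    (Function.update (fun _ => Equiv.swap i' i2') j (Equiv.swap i i2)) a i j b i' j'
  rw [Function.update_self, Function.update_of_ne (Ne.symm hjj),
    Equiv.swap_apply_left, Equiv.swap_apply_left] at key
  exact key.symm

end Graph1
set_option linter.unusedSectionVars false
lemma fin2_pair {a b : Fin 2} (hab : a ≠ b) : (a = 0 ∧ b = 1) ∨ (a = 1 ∧ b = 0) := by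
  revert hab; revert a b; decide

section Graph2

variable {m k : ℕ} [NeZero k] {Γ : SimpleGraph ((Fin 2 × Fin m) × Fin k)}

/-- Decomposition of an automorphism lying in the wreath product `Y ≀ Sym(k)`. -/
lemma aut_decomp (hhigh : autGroup Γ ≤ wreathProduct (flipSym m) (⊤ : Subgroup (Equiv.Perm (Fin k))))
    (σ : Equiv.Perm ((Fin 2 × Fin m) × Fin k)) (hσ : σ ∈ autGroup Γ) :
    ∃ (c : Fin k → Equiv.Perm (Fin 2)) (t : Fin k → Equiv.Perm (Fin m)) (h : Equiv.Perm (Fin k)),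
      ∀ (a : Fin 2) (i : Fin m) (j : Fin k), σ ((a, i), j) = ((c j a, t j i), h j) := by
  obtain ⟨g, h, hg, -, rfl⟩ := (mem_wreathProduct σ).mp (hhigh hσ)
  have hch : ∀ j, ∃ (c : Equiv.Perm (Fin 2)) (t : Equiv.Perm (Fin m)),
      g j = wreathPerm (fun _ => c) t := fun j => (mem_flipSym _).mp (hg j)
  choose c t hct using hch
  refine ⟨c, t, h, fun a i j => ?_⟩
  rw [wreathPerm_apply, hct j]
  rfl

lemma swap01_one : Equiv.swap (0 : Fin 2) 1 1 = 0 := by decide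
lemma swap01_zero : Equiv.swap (0 : Fin 2) 1 0 = 1 := by decide

/-- Within-block flip invariance: swapping the two rows inside a block preserves
within-block adjacency. -/
lemma adj_flip (hm : 0 < m) (hvt : IsVertexTransitive Γ)
    (hhigh : autGroup Γ ≤ wreathProduct (flipSym m) (⊤ : Subgroup (Equiv.Perm (Fin k))))
    (hlow : basePower (symPart m) ≤ autGroup Γ)
    (j : Fin k) (a : Fin 2) (i : Fin m) (b : Fin 2) (i' : Fin m) :
    Γ.Adj ((Equiv.swap 0 1 a, i), j) ((Equiv.swap 0 1 b, i'), j) ↔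
      Γ.Adj ((a, i), j) ((b, i'), j) := by
  set c0 : Fin m := ⟨0, hm⟩
  obtain ⟨e, he⟩ := hvt ((0, c0), j) ((1, c0), j)
  have hmem := iso_mem_autGroup e
  obtain ⟨c, t, h, heq⟩ := aut_decomp hhigh _ hmem
  have h1 : (((c j) 0, t j c0), h j) = (((1 : Fin 2), c0), j) := by
    rw [← heq]; exact he
  simp only [Prod.mk.injEq] at h1
  obtain ⟨⟨hc0, -⟩, hhj⟩ := h1
  have hcj : c j = Equiv.swap 0 1 := by
    apply perm2_eq_swap_of_ne
    rw [hc0]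
    decide
  have key := hmem ((a, i), j) ((b, i'), j)
  rw [heq, heq, hcj, hhj] at key
  have cols := adj_cols hlow (fun _ => t j) (Equiv.swap 0 1 a) i j (Equiv.swap 0 1 b) i' j
  exact cols.symm.trans key

/-- Within-block adjacency does not depend on the block. -/
lemma adj_block0 (hm : 0 < m) (hvt : IsVertexTransitive Γ)
    (hhigh : autGroup Γ ≤ wreathProduct (flipSym m) (⊤ : Subgroup (Equiv.Perm (Fin k))))
    (hlow : basePower (symPart m) ≤ autGroup Γ)
    (j : Fin k) (a : Fin 2) (i : Fin m) (b : Fin 2) (i' : Fin m) :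
    Γ.Adj ((a, i), j) ((b, i'), j) ↔ Γ.Adj ((a, i), 0) ((b, i'), 0) := by
  set c0 : Fin m := ⟨0, hm⟩
  obtain ⟨e, he⟩ := hvt ((0, c0), 0) ((0, c0), j)
  have hmem := iso_mem_autGroup e
  obtain ⟨c, t, h, heq⟩ := aut_decomp hhigh _ hmem
  have h1 : (((c 0) 0, t 0 c0), h 0) = (((0 : Fin 2), c0), j) := by
    rw [← heq]; exact he
  simp only [Prod.mk.injEq] at h1
  obtain ⟨⟨hc0, -⟩, hhj⟩ := h1
  have hcj : c 0 = 1 := perm2_eq_one_of_eq _ hc0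
  have key := hmem ((a, i), 0) ((b, i'), 0)
  rw [heq, heq, hcj, hhj] at key
  simp only [Equiv.Perm.one_apply] at key
  have cols := adj_cols hlow (fun _ => t 0) a i j b i' j
  exact cols.symm.trans key
end Graph2

/-- Whether the pairs `{(0,i),(1,i)}` inside a block are edges. -/
def PropA {m k : ℕ} [NeZero k] (Γ : SimpleGraph ((Fin 2 × Fin m) × Fin k)) : Prop :=
  ∃ i : Fin m, Γ.Adj ((0, i), (0 : Fin k)) ((1, i), 0)

/-- Whether distinct vertices in the same row of a block are adjacent. -/
def PropB {m k : ℕ} [NeZero k] (Γ : SimpleGraph ((Fin 2 × Fin m) × Fin k)) : Prop :=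
  ∃ i i' : Fin m, i ≠ i' ∧ Γ.Adj ((0, i), (0 : Fin k)) ((0, i'), 0)

/-- Whether vertices in different rows and different columns of a block are adjacent. -/
def PropC {m k : ℕ} [NeZero k] (Γ : SimpleGraph ((Fin 2 × Fin m) × Fin k)) : Prop :=
  ∃ i i' : Fin m, i ≠ i' ∧ Γ.Adj ((0, i), (0 : Fin k)) ((1, i'), 0)

/-- Whether a vertex of row `a` of block `j` is adjacent to one of row `b` of block `j'`. -/
def PropR {m k : ℕ} (Γ : SimpleGraph ((Fin 2 × Fin m) × Fin k))
    (a : Fin 2) (j : Fin k) (b : Fin 2) (j' : Fin k) : Prop :=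
  ∃ i i' : Fin m, Γ.Adj ((a, i), j) ((b, i'), j')

section Graph3

variable {m k : ℕ} [NeZero k] {Γ : SimpleGraph ((Fin 2 × Fin m) × Fin k)}


lemma adj_samecol_iff (hm : 0 < m) (hvt : IsVertexTransitive Γ)
    (hhigh : autGroup Γ ≤ wreathProduct (flipSym m) (⊤ : Subgroup (Equiv.Perm (Fin k))))
    (hlow : basePower (symPart m) ≤ autGroup Γ)
    {a b : Fin 2} (hab : a ≠ b) (i : Fin m) (j : Fin k) :
    Γ.Adj ((a, i), j) ((b, i), j) ↔ PropA Γ := by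
  rw [adj_block0 hm hvt hhigh hlow]
  have main : ∀ i2 : Fin m, Γ.Adj ((0, i2), (0 : Fin k)) ((1, i2), 0) ↔ PropA Γ := by
    intro i2
    constructor
    · exact fun h => ⟨i2, h⟩
    · rintro ⟨i3, h3⟩
      exact (adj_swap_col hlow i3 i2 0 1 0).mp h3
  rcases fin2_pair hab with ⟨rfl, rfl⟩ | ⟨rfl, rfl⟩
  · exact main i
  · rw [SimpleGraph.adj_comm]
    exact main i

lemma adj_samerow_iff (hm : 0 < m) (hvt : IsVertexTransitive Γ)
    (hhigh : autGroup Γ ≤ wreathProduct (flipSym m) (⊤ : Subgroup (Equiv.Perm (Fin k))))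
    (hlow : basePower (symPart m) ≤ autGroup Γ)
    {i i' : Fin m} (hii : i ≠ i') (a : Fin 2) (j : Fin k) :
    Γ.Adj ((a, i), j) ((a, i'), j) ↔ PropB Γ := by
  rw [adj_block0 hm hvt hhigh hlow]
  have main : Γ.Adj ((0, i), (0 : Fin k)) ((0, i'), 0) ↔ PropB Γ := by
    constructor
    · exact fun h => ⟨i, i', hii, h⟩
    · rintro ⟨i2, i2', h2, hadj⟩
      exact (adj_cols2 hlow h2 hii 0 0 0).mp hadj
  match a with
  | 0 => exact main
  | 1 =>
    rw [← main]
    have := adj_flip hm hvt hhigh hlow (0 : Fin k) 1 i 1 i'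
    rw [swap01_one] at this
    rw [adj_block0 hm hvt hhigh hlow (0 : Fin k) 0 i 0 i']
    exact this.symm

lemma adj_crossrow_iff (hm : 0 < m) (hvt : IsVertexTransitive Γ)
    (hhigh : autGroup Γ ≤ wreathProduct (flipSym m) (⊤ : Subgroup (Equiv.Perm (Fin k))))
    (hlow : basePower (symPart m) ≤ autGroup Γ)
    {i i' : Fin m} (hii : i ≠ i') {a b : Fin 2} (hab : a ≠ b) (j : Fin k) :
    Γ.Adj ((a, i), j) ((b, i'), j) ↔ PropC Γ := by
  rw [adj_block0 hm hvt hhigh hlow]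
  have main : ∀ {i2 i2' : Fin m}, i2 ≠ i2' →
      (Γ.Adj ((0, i2), (0 : Fin k)) ((1, i2'), 0) ↔ PropC Γ) := by
    intro i2 i2' h2
    constructor
    · exact fun h => ⟨i2, i2', h2, h⟩
    · rintro ⟨i3, i3', h3, hadj⟩
      exact (adj_cols2 hlow h3 h2 0 1 0).mp hadj
  rcases fin2_pair hab with ⟨rfl, rfl⟩ | ⟨rfl, rfl⟩
  · exact main hii
  · have flip := adj_flip hm hvt hhigh hlow (0 : Fin k) 1 i 0 i'
    rw [swap01_one, swap01_zero] at flip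
    rw [← flip]
    exact main hii
  
lemma adj_crossblock_iff (hlow : basePower (symPart m) ≤ autGroup Γ)
    {j j' : Fin k} (hjj : j ≠ j') (a b : Fin 2) (i i' : Fin m) :
    Γ.Adj ((a, i), j) ((b, i'), j') ↔ PropR Γ a j b j' := by
  constructor
  · exact fun h => ⟨i, i', h⟩
  · rintro ⟨i2, i2', hadj⟩
    exact (adj_cross_cols hlow hjj i2 i2' i i' a b).mp hadj

end Graph3
/-- The permutation of `Fin 2 × Fin m` applying a separate column permutation in each row. -/
def rowPerm {m : ℕ} (f : Fin 2 → Equiv.Perm (Fin m)) : Equiv.Perm (Fin 2 × Fin m) where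
  toFun x := (x.1, f x.1 x.2)
  invFun x := (x.1, (f x.1)⁻¹ x.2)
  left_inv := by rintro ⟨a, i⟩; simp
  right_inv := by rintro ⟨a, i⟩; simp

section Graph4

variable {m k : ℕ} [NeZero k] {Γ : SimpleGraph ((Fin 2 × Fin m) × Fin k)}

lemma mem_fixAway_iff {Δ ι : Type*} (i0 : ι) (σ : Equiv.Perm (Δ × ι)) :
    σ ∈ fixAway i0 ↔ ∀ x : Δ × ι, x.2 ≠ i0 → σ x = x := Iff.rfl

lemma a_iff_c_contra (hm2 : 2 ≤ m) (hvt : IsVertexTransitive Γ)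
    (hhigh : autGroup Γ ≤ wreathProduct (flipSym m) (⊤ : Subgroup (Equiv.Perm (Fin k))))
    (hlow : basePower (symPart m) ≤ autGroup Γ)
    (hstab : autGroup Γ ⊓ fixAway (0 : Fin k) = atCoord (0 : Fin k) (symPart m))
    (hac : PropA Γ ↔ PropC Γ) : False := by
  have hm : 0 < m := by omega
  set c0 : Fin m := ⟨0, by omega⟩ with hc0def
  set c1 : Fin m := ⟨1, by omega⟩ with hc1def
  have hc01 : c0 ≠ c1 := by
    simp [hc0def, hc1def, Fin.ext_iff]
  set f : Fin 2 → Equiv.Perm (Fin m) := fun a => if a = 0 then 1 else Equiv.swap c0 c1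
    with hfdef
  set σ : Equiv.Perm ((Fin 2 × Fin m) × Fin k) :=
    wreathPerm (fun l => if l = 0 then rowPerm f else 1) 1 with hσdef
  have hσ0 : ∀ (a : Fin 2) (i : Fin m), σ ((a, i), 0) = ((a, f a i), 0) := by
    intro a i
    simp [hσdef, rowPerm, wreathPerm]
  have hσfix : ∀ x : (Fin 2 × Fin m) × Fin k, x.2 ≠ 0 → σ x = x := by
    intro x hx
    simp [hσdef, wreathPerm, if_neg hx]
  have hf0 : f 0 = 1 := if_pos rfl
  have hσaut : σ ∈ autGroup Γ := by
    rintro ⟨⟨a, i⟩, j⟩ ⟨⟨b, i'⟩, j'⟩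
    by_cases hj : j = 0 <;> by_cases hj' : j' = 0
    · subst hj; subst hj'
      rw [hσ0, hσ0]
      by_cases hab : a = b
      · subst hab
        by_cases hii : i = i'
        · subst hii
          constructor <;> (intro h; exact absurd rfl (Γ.ne_of_adj h))
        · have h2 : f a i ≠ f a i' := fun hc => hii ((f a).injective hc)
          rw [adj_samerow_iff hm hvt hhigh hlow h2,
            adj_samerow_iff hm hvt hhigh hlow hii]
      · by_cases hii : i = i'
        · subst hii
          rw [adj_samecol_iff hm hvt hhigh hlow hab]
          by_cases hff : f a i = f b i
          · rw [hff, adj_samecol_iff hm hvt hhigh hlow hab]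
          · rw [adj_crossrow_iff hm hvt hhigh hlow hff hab]
            exact hac.symm
        · rw [adj_crossrow_iff hm hvt hhigh hlow hii hab]
          by_cases hff : f a i = f b i'
          · rw [hff, adj_samecol_iff hm hvt hhigh hlow hab]
            exact hac
          · rw [adj_crossrow_iff hm hvt hhigh hlow hff hab]
    · subst hj
      rw [hσ0, hσfix ((b, i'), j') hj']
      exact adj_cross_cols hlow (fun h => hj' h.symm) (f a i) i' i i' a b
    · subst hj'
      rw [hσ0, hσfix ((a, i), j) hj]
      have base := adj_cross_cols (Γ := Γ) hlow
        (show (0 : Fin k) ≠ j from fun h => hj h.symm) (f b i') i i' i b a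
      rw [SimpleGraph.adj_comm, base]
      exact Γ.adj_comm _ _
    · rw [hσfix ((a, i), j) hj, hσfix ((b, i'), j') hj']
  have hmem : σ ∈ atCoord (0 : Fin k) (symPart m) := by
    rw [← hstab]
    exact Subgroup.mem_inf.mpr ⟨hσaut, hσfix⟩
  obtain ⟨g, hg, heq⟩ := (mem_atCoord σ).mp hmem
  obtain ⟨s, rfl⟩ := (mem_symPart g).mp hg
  have e1 := DFunLike.congr_fun heq ((0, c0), 0)
  have e2 := DFunLike.congr_fun heq ((1, c0), 0)
  rw [hσ0] at e1 e2
  have hs1 : f 0 c0 = s c0 := by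
    have := congrArg (fun p => p.1.2) e1
    simpa [wreathPerm_apply] using this
  have hs2 : f 1 c0 = s c0 := by
    have := congrArg (fun p => p.1.2) e2
    simpa [wreathPerm_apply] using this
  rw [hf0] at hs1
  have : f 1 c0 = c0 := by rw [hs2, ← hs1]; rfl
  rw [hfdef] at this
  simp only [if_neg (by decide : (1 : Fin 2) ≠ 0)] at this
  rw [Equiv.swap_apply_left] at this
  exact hc01 this.symm

lemma propA_iff_not_propC (hm2 : 2 ≤ m) (hvt : IsVertexTransitive Γ)
    (hhigh : autGroup Γ ≤ wreathProduct (flipSym m) (⊤ : Subgroup (Equiv.Perm (Fin k))))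
    (hlow : basePower (symPart m) ≤ autGroup Γ)
    (hstab : autGroup Γ ⊓ fixAway (0 : Fin k) = atCoord (0 : Fin k) (symPart m)) :
    PropA Γ ↔ ¬ PropC Γ := by
  have h := a_iff_c_contra hm2 hvt hhigh hlow hstab
  by_cases hA : PropA Γ <;> by_cases hC : PropC Γ <;> tauto

end Graph4
section StdGraphs

lemma fromRel_adj_symm {V : Type*} {r : V → V → Prop} (hsymm : ∀ u v, r u v → r v u)
    (u v : V) : (SimpleGraph.fromRel r).Adj u v ↔ u ≠ v ∧ r u v := by
  rw [SimpleGraph.fromRel_adj]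
  constructor
  · rintro ⟨h, hr | hr⟩
    · exact ⟨h, hr⟩
    · exact ⟨h, hsymm _ _ hr⟩
  · rintro ⟨h, hr⟩
    exact ⟨h, Or.inl hr⟩

/-- The `Sym(m)`-invariant graph on `Fin 2 × Fin m` with edge classes selected by
`A` (same column), `B` (same row), `C` (different row and column). -/
def stdG (m : ℕ) (A B C : Prop) : SimpleGraph (Fin 2 × Fin m) :=
  SimpleGraph.fromRel (fun x y =>
    (A ∧ x.1 ≠ y.1 ∧ x.2 = y.2) ∨ (B ∧ x.1 = y.1 ∧ x.2 ≠ y.2) ∨ (C ∧ x.1 ≠ y.1 ∧ x.2 ≠ y.2))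

lemma stdG_adj {m : ℕ} {A B C : Prop} (x y : Fin 2 × Fin m) :
    (stdG m A B C).Adj x y ↔ x ≠ y ∧
      ((A ∧ x.1 ≠ y.1 ∧ x.2 = y.2) ∨ (B ∧ x.1 = y.1 ∧ x.2 ≠ y.2) ∨
        (C ∧ x.1 ≠ y.1 ∧ x.2 ≠ y.2)) := by
  apply fromRel_adj_symm
  rintro u v (⟨h, h1, h2⟩ | ⟨h, h1, h2⟩ | ⟨h, h1, h2⟩)
  · exact Or.inl ⟨h, h1.symm, h2.symm⟩
  · exact Or.inr (Or.inl ⟨h, h1.symm, h2.symm⟩)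
  · exact Or.inr (Or.inr ⟨h, h1.symm, h2.symm⟩)

lemma matching_adj {m : ℕ} (x y : Fin 2 × Fin m) :
    (matching m).Adj x y ↔ x ≠ y ∧ (x.2 = y.2 ∧ x.1 ≠ y.1) := by
  apply fromRel_adj_symm
  rintro u v ⟨h1, h2⟩
  exact ⟨h1.symm, h2.symm⟩

lemma prism_adj {m : ℕ} (x y : Fin 2 × Fin m) :
    (prism m).Adj x y ↔ x ≠ y ∧ ((x.2 = y.2 ∧ x.1 ≠ y.1) ∨ (x.1 = y.1 ∧ x.2 ≠ y.2)) := by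
  apply fromRel_adj_symm
  rintro u v (⟨h1, h2⟩ | ⟨h1, h2⟩)
  · exact Or.inl ⟨h1.symm, h2.symm⟩
  · exact Or.inr ⟨h1.symm, h2.symm⟩

lemma matching_eq_std (m : ℕ) : matching m = stdG m True False False := by
  ext x y
  rw [matching_adj, stdG_adj]
  tauto

lemma prism_eq_std (m : ℕ) : prism m = stdG m True True False := by
  ext x y
  rw [prism_adj, stdG_adj]
  tauto

lemma matchingC_eq_std (m : ℕ) : (matching m)ᶜ = stdG m False True True := by
  ext x y
  rw [SimpleGraph.compl_adj, matching_adj, stdG_adj]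
  have hxy : x = y ↔ x.1 = y.1 ∧ x.2 = y.2 := Prod.ext_iff
  tauto

lemma prismC_eq_std (m : ℕ) : (prism m)ᶜ = stdG m False False True := by
  ext x y
  rw [SimpleGraph.compl_adj, prism_adj, stdG_adj]
  have hxy : x = y ↔ x.1 = y.1 ∧ x.2 = y.2 := Prod.ext_iff
  tauto

lemma stdG_congr {m : ℕ} {A B C A' B' C' : Prop} (hA : A ↔ A') (hB : B ↔ B')
    (hC : C ↔ C') : stdG m A B C = stdG m A' B' C' := by
  ext x y
  rw [stdG_adj, stdG_adj]
  tauto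

lemma stdG_one (A B C B' C' : Prop) : stdG 1 A B C = stdG 1 A B' C' := by
  ext x y
  rw [stdG_adj, stdG_adj]
  have h2 : x.2 = y.2 := Subsingleton.elim _ _
  tauto

/-- Isomorphism of graphs from an equality. -/
def isoOfEq {V : Type*} {G H : SimpleGraph V} (h : G = H) : G ≃g H := by
  subst h; exact SimpleGraph.Iso.refl

/-- Any two graphs on empty vertex types are isomorphic. -/
def isoOfIsEmpty {V W : Type*} [IsEmpty V] [IsEmpty W] (G : SimpleGraph V)
    (H : SimpleGraph W) : G ≃g H where
  toEquiv := Equiv.equivOfIsEmpty V W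
  map_rel_iff' := fun {u _} => isEmptyElim u

end StdGraphs

section Graph5

variable {m k : ℕ} [NeZero k] {Γ : SimpleGraph ((Fin 2 × Fin m) × Fin k)}

/-- The equivalence between a block and `Fin 2 × Fin m`. -/
def blockEquiv (m k : ℕ) [NeZero k] (j : Fin k) : ↥(Dblock m k j) ≃ Fin 2 × Fin m where
  toFun v := v.1.1
  invFun x := ⟨(x, j), rfl⟩
  left_inv := by
    rintro ⟨⟨x, j'⟩, hj⟩
    have : j' = j := hj
    subst this
    rfl
  right_inv := fun x => rfl

lemma induce_D0_iso (hm : 0 < m) (hvt : IsVertexTransitive Γ)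
    (hhigh : autGroup Γ ≤ wreathProduct (flipSym m) (⊤ : Subgroup (Equiv.Perm (Fin k))))
    (hlow : basePower (symPart m) ≤ autGroup Γ) :
    Nonempty (Γ.induce (Dblock m k 0) ≃g stdG m (PropA Γ) (PropB Γ) (PropC Γ)) := by
  refine ⟨⟨blockEquiv m k 0, ?_⟩⟩
  rintro ⟨⟨⟨a, i⟩, j⟩, hj⟩ ⟨⟨⟨b, i'⟩, j'⟩, hj'⟩
  have hj0 : j = 0 := hj
  have hj0' : j' = 0 := hj'
  subst hj0; subst hj0'
  show (stdG m _ _ _).Adj (a, i) (b, i') ↔ Γ.Adj ((a, i), 0) ((b, i'), 0)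
  rw [stdG_adj]
  by_cases hab : a = b <;> by_cases hii : i = i'
  · subst hab; subst hii
    simp [SimpleGraph.irrefl]
  · subst hab
    rw [adj_samerow_iff hm hvt hhigh hlow hii]
    have hne : ((a, i) : Fin 2 × Fin m) ≠ (a, i') := by
      simp [Prod.ext_iff, hii]
    tauto
  · subst hii
    rw [adj_samecol_iff hm hvt hhigh hlow hab]
    have hne : ((a, i) : Fin 2 × Fin m) ≠ (b, i) := by
      simp [Prod.ext_iff, hab]
    tauto
  · rw [adj_crossrow_iff hm hvt hhigh hlow hii hab]
    have hne : ((a, i) : Fin 2 × Fin m) ≠ (b, i') := by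
      simp [Prod.ext_iff, hab]
    tauto

lemma induce_blocks_iso (hm : 0 < m) (hvt : IsVertexTransitive Γ)
    (hhigh : autGroup Γ ≤ wreathProduct (flipSym m) (⊤ : Subgroup (Equiv.Perm (Fin k))))
    (j j' : Fin k) :
    Nonempty (Γ.induce (Dblock m k j) ≃g Γ.induce (Dblock m k j')) := by
  set c0 : Fin m := ⟨0, hm⟩
  obtain ⟨e, he⟩ := hvt ((0, c0), j) ((0, c0), j')
  have hmem := iso_mem_autGroup e
  obtain ⟨c, t, h, heq⟩ := aut_decomp hhigh _ hmem
  have heq' : ∀ x : (Fin 2 × Fin m) × Fin k,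
      (e.toEquiv : Equiv.Perm _) x = ((c x.2 x.1.1, t x.2 x.1.2), h x.2) := by
    rintro ⟨⟨a, i⟩, l⟩
    exact heq a i l
  have hhj : h j = j' := by
    have h1 : ((c j 0, t j c0), h j) = (((0 : Fin 2), c0), j') := by rw [← heq]; exact he
    exact (Prod.ext_iff.mp h1).2
  have hblock : ∀ x : (Fin 2 × Fin m) × Fin k, x ∈ Dblock m k j ↔
      (e.toEquiv : Equiv.Perm _) x ∈ Dblock m k j' := by
    intro x
    rw [heq']
    show x.2 = j ↔ h x.2 = j'
    constructor
    · intro hx; rw [hx, hhj]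
    · intro hx; exact h.injective (by rw [hx, hhj])
  exact ⟨⟨Equiv.subtypeEquiv (e.toEquiv : Equiv.Perm _) hblock, by
    rintro ⟨u, hu⟩ ⟨v, hv⟩
    exact hmem u v⟩⟩

end Graph5
section Quot1

variable {m k : ℕ}

/-- Abbreviation for the quotient vertex set. -/
abbrev QV (m k : ℕ) := Quotient (MulAction.orbitRel
  (basePower (symPart m) : Subgroup (Equiv.Perm ((Fin 2 × Fin m) × Fin k)))
  ((Fin 2 × Fin m) × Fin k))

/-- Abbreviation for the quotient map. -/
abbrev mkQ (m k : ℕ) (v : (Fin 2 × Fin m) × Fin k) : QV m k :=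
  Quotient.mk (MulAction.orbitRel
    (basePower (symPart m) : Subgroup (Equiv.Perm ((Fin 2 × Fin m) × Fin k)))
    ((Fin 2 × Fin m) × Fin k)) v

lemma mkQ_eq_iff (u v : (Fin 2 × Fin m) × Fin k) :
    mkQ m k u = mkQ m k v ↔ u.1.1 = v.1.1 ∧ u.2 = v.2 := by
  rw [mkQ, mkQ, Quotient.eq]
  rw [MulAction.orbitRel_apply, MulAction.mem_orbit_iff]
  constructor
  · rintro ⟨⟨σ, hσ⟩, hact⟩
    obtain ⟨g, hg, rfl⟩ := (mem_basePower σ).mp hσ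
    have hchoice : ∀ j, ∃ s : Equiv.Perm (Fin m), g j = wreathPerm (fun _ => 1) s :=
      fun j => (mem_symPart _).mp (hg j)
    choose s hs using hchoice
    have : wreathPerm g 1 v = u := hact
    rw [← this, wreathPerm_apply, hs v.2]
    exact ⟨rfl, rfl⟩
  · rintro ⟨h1, h2⟩
    refine ⟨⟨wreathPerm (fun _ => wreathPerm (fun _ => 1) (Equiv.swap v.1.2 u.1.2)) 1,
      (mem_basePower _).mpr ⟨_, fun j => (mem_symPart _).mpr ⟨_, rfl⟩, rfl⟩⟩, ?_⟩
    show (wreathPerm (fun _ : Fin k =>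
      wreathPerm (fun _ => (1 : Equiv.Perm (Fin 2))) (Equiv.swap v.1.2 u.1.2)) 1) v = u
    rw [wreathPerm_apply, wreathPerm_apply]
    have : Equiv.swap v.1.2 u.1.2 v.1.2 = u.1.2 := Equiv.swap_apply_left _ _
    rw [this]
    obtain ⟨⟨a, i⟩, j⟩ := u
    obtain ⟨⟨b, i'⟩, j'⟩ := v
    simp only at h1 h2 ⊢
    rw [h1, h2]
    rfl

/-- The row of an orbit. -/
def rowQ (m k : ℕ) : QV m k → Fin 2 :=
  Quotient.lift (fun v => v.1.1) (by
    intro u v huv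
    have : mkQ m k u = mkQ m k v := Quotient.sound huv
    exact ((mkQ_eq_iff u v).mp this).1)

/-- The block of an orbit. -/
def blockQ (m k : ℕ) : QV m k → Fin k :=
  Quotient.lift (fun v => v.2) (by
    intro u v huv
    have : mkQ m k u = mkQ m k v := Quotient.sound huv
    exact ((mkQ_eq_iff u v).mp this).2)

@[simp] lemma rowQ_mk (v : (Fin 2 × Fin m) × Fin k) : rowQ m k (mkQ m k v) = v.1.1 := rfl
@[simp] lemma blockQ_mk (v : (Fin 2 × Fin m) × Fin k) : blockQ m k (mkQ m k v) = v.2 := rfl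

lemma mkQ_repr (q : QV m k) (i : Fin m) : mkQ m k ((rowQ m k q, i), blockQ m k q) = q := by
  obtain ⟨v, rfl⟩ := q.exists_rep
  show mkQ m k _ = mkQ m k v
  rw [mkQ_eq_iff]
  exact ⟨rfl, rfl⟩

/-- The vertex bijection underlying the infinity-graph isomorphism. -/
def vertEquiv (m k : ℕ) [NeZero k] : ((Fin 2 × Fin m) × Fin k) ≃ (QV m k × Fin m) where
  toFun v := (mkQ m k v, v.1.2)
  invFun x := ((rowQ m k x.1, x.2), blockQ m k x.1)
  left_inv := by
    rintro ⟨⟨a, i⟩, j⟩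
    rfl
  right_inv := by
    rintro ⟨q, i⟩
    simp only
    rw [mkQ_repr]

lemma mem_quotPart_pair (hm : 0 < m) (u v : (Fin 2 × Fin m) × Fin k) :
    ({mkQ m k u, mkQ m k v} : Set (QV m k)) ∈ quotPart m k (basePower (symPart m)) ↔
      u.2 = v.2 ∧ u.1.1 ≠ v.1.1 := by
  set c0 : Fin m := ⟨0, hm⟩
  constructor
  · rintro ⟨j, hS⟩
    have hmemu : mkQ m k u ∈ ({mkQ m k u, mkQ m k v} : Set (QV m k)) := Or.inl rfl
    have hmemv : mkQ m k v ∈ ({mkQ m k u, mkQ m k v} : Set (QV m k)) := Or.inr rfl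
    rw [hS] at hmemu hmemv
    obtain ⟨w, hw⟩ := hmemu
    obtain ⟨w', hw'⟩ := hmemv
    have hu2 : u.2 = j := ((mkQ_eq_iff _ _).mp hw).2
    have hv2 : v.2 = j := ((mkQ_eq_iff _ _).mp hw').2
    refine ⟨hu2.trans hv2.symm, ?_⟩
    intro hrow
    have huv : mkQ m k u = mkQ m k v := (mkQ_eq_iff _ _).mpr ⟨hrow, hu2.trans hv2.symm⟩
    have h0 : mkQ m k ((0, c0), j) ∈ ({mkQ m k u, mkQ m k v} : Set (QV m k)) := by
      rw [hS]; exact ⟨(0, c0), rfl⟩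
    have h1 : mkQ m k ((1, c0), j) ∈ ({mkQ m k u, mkQ m k v} : Set (QV m k)) := by
      rw [hS]; exact ⟨(1, c0), rfl⟩
    rw [huv] at h0 h1
    have e0 : mkQ m k ((0, c0), j) = mkQ m k v := by
      rcases h0 with h | h
      · exact h
      · exact h
    have e1 : mkQ m k ((1, c0), j) = mkQ m k v := by
      rcases h1 with h | h
      · exact h
      · exact h
    have : (0 : Fin 2) = v.1.1 := ((mkQ_eq_iff _ _).mp e0).1
    have h1' : (1 : Fin 2) = v.1.1 := ((mkQ_eq_iff _ _).mp e1).1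
    rw [← h1'] at this
    exact absurd this (by decide)
  · rintro ⟨hblock, hrow⟩
    refine ⟨u.2, ?_⟩
    ext q
    constructor
    · rintro (rfl | rfl)
      · exact ⟨u.1, by rw [mkQ_eq_iff]; exact ⟨rfl, rfl⟩⟩
      · exact ⟨v.1, by rw [mkQ_eq_iff]; exact ⟨rfl, hblock.symm⟩⟩
    · rintro ⟨w, rfl⟩
      have hw : w.1 = u.1.1 ∨ w.1 = v.1.1 := by
        have := hrow
        rcases fin2_pair this with ⟨h1, h2⟩ | ⟨h1, h2⟩ <;>
          rcases fin2_pair (a := w.1) (b := if w.1 = 0 then 1 else 0) (by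
            split <;> simp_all) with ⟨hw1, -⟩ | ⟨hw1, -⟩ <;> simp [hw1, h1, h2]
      rcases hw with h | h
      · exact Or.inl ((mkQ_eq_iff _ _).mpr ⟨h, rfl⟩)
      · exact Or.inr ((mkQ_eq_iff _ _).mpr ⟨h, hblock⟩)

lemma quotGraph_adj_iff {Γ : SimpleGraph ((Fin 2 × Fin m) × Fin k)} (α β : QV m k) :
    (quotGraph Γ (basePower (symPart m))).Adj α β ↔ α ≠ β ∧
      ∃ u v, mkQ m k u = α ∧ mkQ m k v = β ∧ Γ.Adj u v := by
  apply fromRel_adj_symm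
  rintro p q ⟨u, v, h1, h2, h3⟩
  exact ⟨v, u, h2, h1, h3.symm⟩

lemma quotGraph_adj_cross {Γ : SimpleGraph ((Fin 2 × Fin m) × Fin k)}
    (hlow : basePower (symPart m) ≤ autGroup Γ)
    {u v : (Fin 2 × Fin m) × Fin k} (hblock : u.2 ≠ v.2) :
    (quotGraph Γ (basePower (symPart m))).Adj (mkQ m k u) (mkQ m k v) ↔ Γ.Adj u v := by
  rw [quotGraph_adj_iff]
  constructor
  · rintro ⟨-, u', v', hu', hv', hadj⟩
    obtain ⟨hrow1, hblk1⟩ := (mkQ_eq_iff _ _).mp hu'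
    obtain ⟨hrow2, hblk2⟩ := (mkQ_eq_iff _ _).mp hv'
    obtain ⟨⟨a, i⟩, j⟩ := u
    obtain ⟨⟨b, i'⟩, j'⟩ := v
    obtain ⟨⟨a2, i2⟩, j2⟩ := u'
    obtain ⟨⟨b2, i2'⟩, j2'⟩ := v'
    simp only at hrow1 hblk1 hrow2 hblk2 hblock
    subst hrow1; subst hblk1; subst hrow2; subst hblk2
    exact (adj_cross_cols hlow hblock i2 i2' i i' a2 b2).mp hadj
  · intro hadj
    refine ⟨?_, u, v, rfl, rfl, hadj⟩
    intro hc
    exact hblock ((mkQ_eq_iff _ _).mp hc).2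

end Quot1
section Inf1

lemma infGraph_adj {Ω : Type*} (Sg : SimpleGraph Ω) (P : Set (Set Ω)) (m : ℕ)
    (lam kap : ZMod 2) (x y : Ω × Fin m) :
    (infGraph Sg P m lam kap).Adj x y ↔ x ≠ y ∧
      ((({x.1, y.1} : Set Ω) ∉ P ∧ Sg.Adj x.1 y.1) ∨
       (({x.1, y.1} : Set Ω) ∈ P ∧ lam = 1 ∧ x.2 = y.2) ∨
       (({x.1, y.1} : Set Ω) ∈ P ∧ lam = 0 ∧ x.2 ≠ y.2) ∨
       (x.1 = y.1 ∧ kap = 1)) := by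
  apply fromRel_adj_symm
  rintro u v (⟨h1, h2⟩ | ⟨h1, h2, h3⟩ | ⟨h1, h2, h3⟩ | ⟨h1, h2⟩)
  · exact Or.inl ⟨by rwa [Set.pair_comm], h2.symm⟩
  · exact Or.inr (Or.inl ⟨by rwa [Set.pair_comm], h2, h3.symm⟩)
  · exact Or.inr (Or.inr (Or.inl ⟨by rwa [Set.pair_comm], h2, h3.symm⟩))
  · exact Or.inr (Or.inr (Or.inr ⟨h1.symm, h2⟩))

lemma two_le_of_ne {m : ℕ} {i i' : Fin m} (h : i ≠ i') : 2 ≤ m := by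
  by_contra hc
  push_neg at hc
  interval_cases m
  · exact i.elim0
  · exact h (Subsingleton.elim _ _)

lemma fin2_add_iff : ∀ (i i' a b : Fin 2), a ≠ b → (i + a = i' + b ↔ i ≠ i') := by decide

lemma zmod2_zero_ne_one : (0 : ZMod 2) ≠ 1 := by decide
lemma zmod2_one_ne_zero : (1 : ZMod 2) ≠ 0 := by decide

/-- The `λ`-swap isomorphism for `m = 2`. -/
lemma infSwap {Ω : Type*} (Sg : SimpleGraph Ω) (P : Set (Set Ω)) (χ : Ω → Fin 2)
    (hP : ∀ α β : Ω, ({α, β} : Set Ω) ∈ P → χ α ≠ χ β) (kap : ZMod 2) :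
    Nonempty (infGraph Sg P 2 1 kap ≃g infGraph Sg P 2 0 kap) := by
  refine ⟨⟨⟨fun x => (x.1, x.2 + χ x.1), fun x => (x.1, x.2 - χ x.1), ?_, ?_⟩, ?_⟩⟩
  · rintro ⟨α, i⟩; simp
  · rintro ⟨α, i⟩; simp
  · rintro ⟨α, i⟩ ⟨β, i'⟩
    show (infGraph Sg P 2 0 kap).Adj (α, i + χ α) (β, i' + χ β) ↔
      (infGraph Sg P 2 1 kap).Adj (α, i) (β, i')
    rw [infGraph_adj, infGraph_adj]
    by_cases hp : ({α, β} : Set Ω) ∈ P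
    · have hχ : χ α ≠ χ β := hP _ _ hp
      have hαβ : α ≠ β := fun hc => hχ (by rw [hc])
      have hiff := fin2_add_iff i i' (χ α) (χ β) hχ
      have hne1 : ((α, i + χ α) : Ω × Fin 2) ≠ (β, i' + χ β) := by
        simp [Prod.ext_iff, hαβ]
      have hne2 : ((α, i) : Ω × Fin 2) ≠ (β, i') := by
        simp [Prod.ext_iff, hαβ]
      constructor
      · rintro ⟨-, (⟨hnp, -⟩ | ⟨-, h01, -⟩ | ⟨-, -, himg⟩ | ⟨heq, -⟩)⟩
        · exact absurd hp hnp
        · exact absurd h01 zmod2_zero_ne_one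
        · have hii : i = i' := by
            by_contra hne
            exact himg (hiff.mpr hne)
          exact ⟨hne2, Or.inr (Or.inl ⟨hp, rfl, hii⟩)⟩
        · exact absurd heq hαβ
      · rintro ⟨-, (⟨hnp, -⟩ | ⟨-, -, hii⟩ | ⟨-, h10, -⟩ | ⟨heq, -⟩)⟩
        · exact absurd hp hnp
        · exact ⟨hne1, Or.inr (Or.inr (Or.inl ⟨hp, rfl, fun hc => (hiff.mp hc) hii⟩))⟩
        · exact absurd h10 zmod2_one_ne_zero
        · exact absurd heq hαβ
    · by_cases hab : α = β
      · subst hab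
        have hcancel : ∀ i2 i2' : Fin 2, i2 + χ α = i2' + χ α ↔ i2 = i2' := by
          intro i2 i2'
          constructor
          · exact fun h => add_right_cancel h
          · rintro rfl; rfl
        constructor
        · rintro ⟨hne, (⟨-, hadj⟩ | ⟨hp', -⟩ | ⟨hp', -⟩ | ⟨-, hk⟩)⟩
          · exact absurd hadj (Sg.irrefl)
          · exact absurd hp' hp
          · exact absurd hp' hp
          · refine ⟨?_, Or.inr (Or.inr (Or.inr ⟨rfl, hk⟩))⟩
            intro hc
            rw [Prod.ext_iff] at hc
            exact hne (by
              rw [Prod.ext_iff]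
              exact ⟨rfl, (hcancel i i').mpr hc.2 ▸ rfl⟩)
        · rintro ⟨hne, (⟨-, hadj⟩ | ⟨hp', -⟩ | ⟨hp', -⟩ | ⟨-, hk⟩)⟩
          · exact absurd hadj (Sg.irrefl)
          · exact absurd hp' hp
          · exact absurd hp' hp
          · refine ⟨?_, Or.inr (Or.inr (Or.inr ⟨rfl, hk⟩))⟩
            intro hc
            rw [Prod.ext_iff] at hc
            exact hne (by
              rw [Prod.ext_iff]
              exact ⟨rfl, (hcancel i i').mp hc.2 ▸ rfl⟩)
      · have hne1 : ((α, i + χ α) : Ω × Fin 2) ≠ (β, i' + χ β) := by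
          simp [Prod.ext_iff, hab]
        have hne2 : ((α, i) : Ω × Fin 2) ≠ (β, i') := by
          simp [Prod.ext_iff, hab]
        constructor
        · rintro ⟨-, (⟨hnp, hadj⟩ | ⟨hp', -⟩ | ⟨hp', -⟩ | ⟨heq, -⟩)⟩
          · exact ⟨hne2, Or.inl ⟨hnp, hadj⟩⟩
          · exact absurd hp' hp
          · exact absurd hp' hp
          · exact absurd heq hab
        · rintro ⟨-, (⟨hnp, hadj⟩ | ⟨hp', -⟩ | ⟨hp', -⟩ | ⟨heq, -⟩)⟩
          · exact ⟨hne1, Or.inl ⟨hnp, hadj⟩⟩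
          · exact absurd hp' hp
          · exact absurd hp' hp
          · exact absurd heq hab

end Inf1
section Inf2

variable {m k : ℕ} [NeZero k] {Γ : SimpleGraph ((Fin 2 × Fin m) × Fin k)}

lemma canonical_iso (hm : 0 < m) (hvt : IsVertexTransitive Γ)
    (hhigh : autGroup Γ ≤ wreathProduct (flipSym m) (⊤ : Subgroup (Equiv.Perm (Fin k))))
    (hlow : basePower (symPart m) ≤ autGroup Γ)
    (lam kap : ZMod 2)
    (hAlam : PropA Γ ↔ lam = 1)
    (hClam : 2 ≤ m → (PropC Γ ↔ lam = 0))
    (hBkap : 2 ≤ m → (PropB Γ ↔ kap = 1)) :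
    Nonempty (Γ ≃g infGraph (quotGraph Γ (basePower (symPart m)))
      (quotPart m k (basePower (symPart m))) m lam kap) := by
  refine ⟨⟨vertEquiv m k, ?_⟩⟩
  rintro ⟨⟨a, i⟩, j⟩ ⟨⟨b, i'⟩, j'⟩
  show (infGraph _ _ _ _ _).Adj (mkQ m k ((a, i), j), i) (mkQ m k ((b, i'), j'), i') ↔
    Γ.Adj ((a, i), j) ((b, i'), j')
  rw [infGraph_adj]
  by_cases hjj : j = j'
  · subst hjj
    by_cases hab : a = b
    · subst hab
      have hαβ : mkQ m k ((a, i), j) = mkQ m k ((a, i'), j) :=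
        (mkQ_eq_iff _ _).mpr ⟨rfl, rfl⟩
      have hnp : ({mkQ m k ((a, i), j), mkQ m k ((a, i'), j)} :
          Set (QV m k)) ∉ quotPart m k (basePower (symPart m)) := by
        rw [mem_quotPart_pair hm]
        rintro ⟨-, hr⟩
        exact hr rfl
      by_cases hii : i = i'
      · subst hii
        constructor
        · rintro ⟨hne, -⟩
          exact absurd rfl hne
        · intro hadj
          exact (Γ.irrefl hadj).elim
      · have hm2 := two_le_of_ne hii
        constructor
        · rintro ⟨hne, (⟨-, hq⟩ | ⟨hp, -⟩ | ⟨hp, -⟩ | ⟨-, hk⟩)⟩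
          · exact (((quotGraph Γ (basePower (symPart m))).irrefl) (hαβ ▸ hq)).elim
          · exact absurd hp hnp
          · exact absurd hp hnp
          · exact (adj_samerow_iff hm hvt hhigh hlow hii a j).mpr ((hBkap hm2).mpr hk)
        · intro hadj
          have hB : PropB Γ := (adj_samerow_iff hm hvt hhigh hlow hii a j).mp hadj
          refine ⟨fun hc => hii (congrArg Prod.snd hc),
            Or.inr (Or.inr (Or.inr ⟨hαβ, (hBkap hm2).mp hB⟩))⟩
    · have hpp : ({mkQ m k ((a, i), j), mkQ m k ((b, i'), j)} :
          Set (QV m k)) ∈ quotPart m k (basePower (symPart m)) :=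
        (mem_quotPart_pair hm _ _).mpr ⟨rfl, hab⟩
      have hαβ : mkQ m k ((a, i), j) ≠ mkQ m k ((b, i'), j) :=
        fun hc => hab ((mkQ_eq_iff _ _).mp hc).1
      by_cases hii : i = i'
      · subst hii
        constructor
        · rintro ⟨-, (⟨hnp, -⟩ | ⟨-, h1, -⟩ | ⟨-, -, hne2⟩ | ⟨heq, -⟩)⟩
          · exact absurd hpp hnp
          · exact (adj_samecol_iff hm hvt hhigh hlow hab i j).mpr (hAlam.mpr h1)
          · exact absurd rfl hne2
          · exact absurd heq hαβ
        · intro hadj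
          have h1 : lam = 1 := hAlam.mp ((adj_samecol_iff hm hvt hhigh hlow hab i j).mp hadj)
          exact ⟨fun hc => hαβ (congrArg Prod.fst hc), Or.inr (Or.inl ⟨hpp, h1, rfl⟩)⟩
      · have hm2 := two_le_of_ne hii
        constructor
        · rintro ⟨-, (⟨hnp, -⟩ | ⟨-, -, hii2⟩ | ⟨-, h0, -⟩ | ⟨heq, -⟩)⟩
          · exact absurd hpp hnp
          · exact absurd hii2 hii
          · exact (adj_crossrow_iff hm hvt hhigh hlow hii hab j).mpr ((hClam hm2).mpr h0)
          · exact absurd heq hαβ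
        · intro hadj
          have h0 : lam = 0 :=
            (hClam hm2).mp ((adj_crossrow_iff hm hvt hhigh hlow hii hab j).mp hadj)
          exact ⟨fun hc => hαβ (congrArg Prod.fst hc),
            Or.inr (Or.inr (Or.inl ⟨hpp, h0, hii⟩))⟩
  · have hnp : ({mkQ m k ((a, i), j), mkQ m k ((b, i'), j')} :
        Set (QV m k)) ∉ quotPart m k (basePower (symPart m)) := by
      rw [mem_quotPart_pair hm]
      rintro ⟨hj2, -⟩
      exact hjj hj2
    have hαβ : mkQ m k ((a, i), j) ≠ mkQ m k ((b, i'), j') :=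
      fun hc => hjj ((mkQ_eq_iff _ _).mp hc).2
    have hq := quotGraph_adj_cross hlow (u := ((a, i), j)) (v := ((b, i'), j')) hjj
    constructor
    · rintro ⟨-, (⟨-, hadj⟩ | ⟨hp, -⟩ | ⟨hp, -⟩ | ⟨heq, -⟩)⟩
      · exact hq.mp hadj
      · exact absurd hp hnp
      · exact absurd hp hnp
      · exact absurd heq hαβ
    · intro hadj
      exact ⟨fun hc => hαβ (congrArg Prod.fst hc), Or.inl ⟨hnp, hq.mpr hadj⟩⟩

end Inf2
section Part3

variable {m k : ℕ} [NeZero k] {Γ : SimpleGraph ((Fin 2 × Fin m) × Fin k)}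

lemma fin2_swap_of_ne {a b : Fin 2} (h : a ≠ b) : Equiv.swap 0 1 a = b := by
  revert h; revert a b; decide

lemma fin2_swap_ne (a : Fin 2) : Equiv.swap 0 1 a ≠ a := by revert a; decide

lemma fin2_eq_or {x a b : Fin 2} (h : a ≠ b) : x = a ∨ x = b := by
  revert h; revert x a b; decide

lemma no_transposition (hm : 0 < m) (hvt : IsVertexTransitive Γ)
    (hhigh : autGroup Γ ≤ wreathProduct (flipSym m) (⊤ : Subgroup (Equiv.Perm (Fin k))))
    (hlow : basePower (symPart m) ≤ autGroup Γ)
    (hstab : autGroup Γ ⊓ fixAway (0 : Fin k) = atCoord (0 : Fin k) (symPart m)) :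
    ¬ ∃ e : quotGraph Γ (basePower (symPart m)) ≃g quotGraph Γ (basePower (symPart m)),
        (∃ a b, a ≠ b ∧ e a = b ∧ e b = a ∧ ∀ q, q ≠ a → q ≠ b → e q = q) ∧
        ∀ S ∈ quotPart m k (basePower (symPart m)),
          (fun q => e q) '' S ∈ quotPart m k (basePower (symPart m)) := by
  rintro ⟨e, ⟨a, b, hab, hea, heb, hfix⟩, hpart⟩
  obtain ⟨u, hu⟩ := a.exists_rep
  obtain ⟨v, hv⟩ := b.exists_rep
  have hu' : mkQ m k u = a := hu
  have hv' : mkQ m k v = b := hv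
  obtain ⟨⟨au, iu⟩, ju⟩ := u
  obtain ⟨⟨av, iv⟩, jv⟩ := v
  by_cases hblocks : ju = jv
  · -- the two swapped orbits lie in the same block: build a row flip of that block
    subst hblocks
    have hrow : au ≠ av := by
      intro hc
      exact hab (by rw [← hu', ← hv']; exact (mkQ_eq_iff _ _).mpr ⟨hc, rfl⟩)
    set j := ju with hjdef
    -- how e acts on the orbits of block j
    have hswap : ∀ x : Fin 2 × Fin m,
        e (mkQ m k (x, j)) = mkQ m k ((Equiv.swap 0 1 x.1, x.2), j) := by
      rintro ⟨x1, x2⟩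
      rcases fin2_eq_or (x := x1) hrow with h | h
      · have h1 : mkQ m k ((x1, x2), j) = a := by
          rw [← hu']; exact (mkQ_eq_iff _ _).mpr ⟨h, rfl⟩
        rw [h1, hea, ← hv']
        refine (mkQ_eq_iff _ _).mpr ⟨?_, rfl⟩
        show (av : Fin 2) = Equiv.swap 0 1 x1
        rw [h]
        exact (fin2_swap_of_ne hrow).symm
      · have h1 : mkQ m k ((x1, x2), j) = b := by
          rw [← hv']; exact (mkQ_eq_iff _ _).mpr ⟨h, rfl⟩
        rw [h1, heb, ← hu']
        refine (mkQ_eq_iff _ _).mpr ⟨?_, rfl⟩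
        show (au : Fin 2) = Equiv.swap 0 1 x1
        rw [h]
        exact (fin2_swap_of_ne hrow.symm).symm
    have hfixq : ∀ w : (Fin 2 × Fin m) × Fin k, w.2 ≠ j → e (mkQ m k w) = mkQ m k w := by
      intro w hw
      apply hfix
      · rw [← hu']
        intro hc
        exact hw ((mkQ_eq_iff _ _).mp hc).2
      · rw [← hv']
        intro hc
        exact hw ((mkQ_eq_iff _ _).mp hc).2
    -- crossing edges are preserved by the row flip of block j
    have hcross : ∀ (x : Fin 2 × Fin m) (y : (Fin 2 × Fin m) × Fin k), y.2 ≠ j →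
        (Γ.Adj ((Equiv.swap 0 1 x.1, x.2), j) y ↔ Γ.Adj (x, j) y) := by
      intro x y hy
      have hblk : (((Equiv.swap 0 1 x.1, x.2), j) : (Fin 2 × Fin m) × Fin k).2 ≠ y.2 :=
        fun hc => hy hc.symm
      have hblk2 : ((x, j) : (Fin 2 × Fin m) × Fin k).2 ≠ y.2 := fun hc => hy hc.symm
      rw [← quotGraph_adj_cross hlow hblk, ← quotGraph_adj_cross hlow hblk2]
      have hmr := e.map_rel_iff (a := mkQ m k (x, j)) (b := mkQ m k y)
      rw [hswap x, hfixq y hy] at hmr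
      exact hmr
    -- the row flip of block j
    set flipAt : Equiv.Perm ((Fin 2 × Fin m) × Fin k) :=
      wreathPerm (fun l => if l = j then superflip m else 1) 1 with hflipdef
    have hfj : ∀ x : Fin 2 × Fin m, flipAt (x, j) = ((Equiv.swap 0 1 x.1, x.2), j) := by
      intro x
      show ((if j = j then superflip m else 1) x, j) = _
      rw [if_pos rfl]
      rfl
    have hfnot : ∀ x : (Fin 2 × Fin m) × Fin k, x.2 ≠ j → flipAt x = x := by
      intro x hx
      show ((if x.2 = j then superflip m else 1) x.1, x.2) = x
      rw [if_neg hx]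
      rfl
    have hflipmem : flipAt ∈ autGroup Γ := by
      rintro ⟨⟨xa, xi⟩, xj⟩ ⟨⟨ya, yi⟩, yj⟩
      by_cases hxj : xj = j <;> by_cases hyj : yj = j
      · subst hxj; subst hyj
        rw [hfj, hfj]
        exact adj_flip hm hvt hhigh hlow _ xa xi ya yi
      · subst hxj
        rw [hfj, hfnot ((ya, yi), yj) hyj]
        exact hcross (xa, xi) ((ya, yi), yj) hyj
      · subst hyj
        rw [hfnot ((xa, xi), xj) hxj, hfj]
        rw [SimpleGraph.adj_comm]
        rw [hcross (ya, yi) ((xa, xi), xj) hxj]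
        exact Γ.adj_comm _ _
      · rw [hfnot ((xa, xi), xj) hxj, hfnot ((ya, yi), yj) hyj]
    -- transport the flip to block 0 and contradict the stabiliser condition
    set c0 : Fin m := ⟨0, hm⟩
    obtain ⟨e2, he2⟩ := hvt ((0, c0), 0) ((0, c0), j)
    have hσmem := iso_mem_autGroup e2
    obtain ⟨cc, tt, hh, heq⟩ := aut_decomp hhigh _ hσmem
    set σ : Equiv.Perm ((Fin 2 × Fin m) × Fin k) := (e2.toEquiv : Equiv.Perm _) with hσdef
    have hh0 : hh 0 = j := by
      have h1 : ((cc 0 0, tt 0 c0), hh 0) = (((0 : Fin 2), c0), j) := by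
        rw [← heq]; exact he2
      exact (Prod.ext_iff.mp h1).2
    set ρ : Equiv.Perm ((Fin 2 × Fin m) × Fin k) := σ⁻¹ * flipAt * σ with hρdef
    have hρaut : ρ ∈ autGroup Γ := mul_mem (mul_mem (inv_mem hσmem) hflipmem) hσmem
    have hρfix : ∀ x : (Fin 2 × Fin m) × Fin k, x.2 ≠ 0 → ρ x = x := by
      rintro ⟨⟨xa, xi⟩, xj⟩ hx
      rw [hρdef, Equiv.Perm.mul_apply, Equiv.Perm.mul_apply, heq]
      rw [hfnot ((cc xj xa, tt xj xi), hh xj) (by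
        intro hc
        exact hx (hh.injective (show hh xj = hh 0 by rw [hh0]; exact hc)))]
      rw [← heq]
      exact Equiv.symm_apply_apply σ _
    have hρmem : ρ ∈ atCoord (0 : Fin k) (symPart m) := by
      rw [← hstab]
      exact Subgroup.mem_inf.mpr ⟨hρaut, hρfix⟩
    obtain ⟨g, hg, hρeq⟩ := (mem_atCoord ρ).mp hρmem
    obtain ⟨s, rfl⟩ := (mem_symPart g).mp hg
    have hcomm : σ * ρ = flipAt * σ := by
      rw [hρdef]
      group
    have heval := DFunLike.congr_fun hcomm ((0, c0), 0)
    have hL : (σ * ρ) ((0, c0), 0) = ((cc 0 0, tt 0 (s c0)), hh 0) := by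
      rw [Equiv.Perm.mul_apply, hρeq]
      have hρpt : (wreathPerm (fun i => if i = (0 : Fin k) then
          wreathPerm (fun _ => (1 : Equiv.Perm (Fin 2))) s else 1) 1) ((0, c0), 0)
          = (((0 : Fin 2), s c0), 0) := by
        show ((if (0 : Fin k) = 0 then wreathPerm (fun _ => (1 : Equiv.Perm (Fin 2))) s
          else 1) (0, c0), 0) = _
        rw [if_pos rfl]
        rfl
      rw [hρpt, heq]
    have hR : (flipAt * σ) ((0, c0), 0) = ((Equiv.swap 0 1 (cc 0 0), tt 0 c0), j) := by
      rw [Equiv.Perm.mul_apply, heq, hh0, hfj]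
    rw [hL, hR] at heval
    have : cc 0 0 = Equiv.swap 0 1 (cc 0 0) := (Prod.ext_iff.mp (Prod.ext_iff.mp heval).1).1
    exact fin2_swap_ne _ this.symm
  · -- the two swapped orbits lie in different blocks: contradict partition preservation
    have hS : ({q | ∃ w : Fin 2 × Fin m, q = mkQ m k (w, ju)} : Set (QV m k))
        ∈ quotPart m k (basePower (symPart m)) := ⟨ju, rfl⟩
    obtain ⟨l, hl⟩ := hpart _ hS
    -- e a = b is in the image
    have hbmem : b ∈ (fun q => e q) '' {q | ∃ w : Fin 2 × Fin m, q = mkQ m k (w, ju)} := by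
      refine ⟨a, ⟨(au, iu), hu'.symm⟩, hea⟩
    rw [hl] at hbmem
    obtain ⟨w, hw⟩ := hbmem
    have hjv : jv = l := by
      have := (mkQ_eq_iff _ _).mp (hv'.trans hw)
      exact this.2
    -- the partner of a is fixed by e, yet lies in the image
    have hane : mkQ m k ((Equiv.swap 0 1 au, iu), ju) ≠ a := by
      rw [← hu']
      intro hc
      exact fin2_swap_ne au ((mkQ_eq_iff _ _).mp hc).1
    have hbne : mkQ m k ((Equiv.swap 0 1 au, iu), ju) ≠ b := by
      rw [← hv']
      intro hc
      exact hblocks ((mkQ_eq_iff _ _).mp hc).2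
    have hamem : mkQ m k ((Equiv.swap 0 1 au, iu), ju)
        ∈ (fun q => e q) '' {q | ∃ w : Fin 2 × Fin m, q = mkQ m k (w, ju)} := by
      refine ⟨_, ⟨(Equiv.swap 0 1 au, iu), rfl⟩, hfix _ hane hbne⟩
    rw [hl] at hamem
    obtain ⟨w', hw'⟩ := hamem
    have hju : ju = l := ((mkQ_eq_iff _ _).mp hw').2
    exact hblocks (hju.trans hjv.symm)

end Part3
section Invariants

/-- Every vertex has at most one neighbour. -/
def Deg1 {V : Type*} (G : SimpleGraph V) : Prop :=
  ∀ v w u : V, G.Adj v w → G.Adj v u → w = u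

/-- The graph contains a triangle. -/
def HasTri {V : Type*} (G : SimpleGraph V) : Prop :=
  ∃ v w u : V, G.Adj v w ∧ G.Adj w u ∧ G.Adj v u

/-- The graph contains an edge lying in no triangle. -/
def EdgeNoTri {V : Type*} (G : SimpleGraph V) : Prop :=
  ∃ v w : V, G.Adj v w ∧ ∀ u, ¬ (G.Adj v u ∧ G.Adj w u)

/-- The graph contains an edge. -/
def HasEdge {V : Type*} (G : SimpleGraph V) : Prop := ∃ v w : V, G.Adj v w

variable {V W : Type*} {G : SimpleGraph V} {H : SimpleGraph W}

lemma Deg1.transfer (e : G ≃g H) (h : Deg1 H) : Deg1 G := by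
  intro v w u h1 h2
  exact e.injective (h (e v) (e w) (e u) (e.map_rel_iff.mpr h1) (e.map_rel_iff.mpr h2))

lemma HasTri.transfer (e : G ≃g H) (h : HasTri G) : HasTri H := by
  obtain ⟨v, w, u, h1, h2, h3⟩ := h
  exact ⟨e v, e w, e u, e.map_rel_iff.mpr h1, e.map_rel_iff.mpr h2, e.map_rel_iff.mpr h3⟩

lemma HasEdge.transfer (e : G ≃g H) (h : HasEdge G) : HasEdge H := by
  obtain ⟨v, w, h1⟩ := h
  exact ⟨e v, e w, e.map_rel_iff.mpr h1⟩

lemma EdgeNoTri.transfer (e : G ≃g H) (h : EdgeNoTri G) : EdgeNoTri H := by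
  obtain ⟨v, w, h1, h2⟩ := h
  refine ⟨e v, e w, e.map_rel_iff.mpr h1, fun u ⟨hu1, hu2⟩ => ?_⟩
  apply h2 (e.symm u)
  constructor
  · have := e.map_rel_iff (a := v) (b := e.symm u)
    rw [e.apply_symm_apply] at this
    exact this.mp hu1
  · have := e.map_rel_iff (a := w) (b := e.symm u)
    rw [e.apply_symm_apply] at this
    exact this.mp hu2

end Invariants

section StdFacts

lemma fin2_ne_ne {x y a : Fin 2} (h1 : a ≠ x) (h2 : a ≠ y) : x = y := by
  revert h1 h2; revert x y a; decide

lemma fin2_eq_one_of_ne {x : Fin 2} (h : x ≠ 0) : x = 1 := by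
  revert h; revert x; decide

lemma fin_eq_of_le_two {m : ℕ} (hm : m ≤ 2) {i i' i'' : Fin m} (h1 : i ≠ i'')
    (h2 : i' ≠ i'') : i = i' := by
  interval_cases m
  · exact i.elim0
  · exact Subsingleton.elim _ _
  · revert h1 h2; revert i i' i''; decide

lemma exists_third {m : ℕ} (hm3 : 3 ≤ m) (i i' : Fin m) : ∃ l : Fin m, l ≠ i ∧ l ≠ i' := by
  by_contra hc
  push_neg at hc
  have hsub : (Finset.univ : Finset (Fin m)) ⊆ {i, i'} := by
    intro l _
    simp only [Finset.mem_insert, Finset.mem_singleton]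
    by_cases h : l = i
    · exact Or.inl h
    · exact Or.inr (hc l h)
  have h1 := Finset.card_le_card hsub
  have h2 : ({i, i'} : Finset (Fin m)).card ≤ 2 := by
    apply le_trans (Finset.card_insert_le _ _)
    simp
  rw [Finset.card_univ, Fintype.card_fin] at h1
  omega

variable {m : ℕ} {A B C : Prop}

lemma deg1_std_matchingLike (hB : ¬B) (hC : ¬C) : Deg1 (stdG m A B C) := by
  intro v w u h1 h2
  rcases (stdG_adj v w).mp h1 with ⟨-, ⟨-, hr1, hc1⟩ | ⟨hb, -⟩ | ⟨hc', -⟩⟩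
  · rcases (stdG_adj v u).mp h2 with ⟨-, ⟨-, hr2, hc2⟩ | ⟨hb, -⟩ | ⟨hc', -⟩⟩
    · exact Prod.ext (fin2_ne_ne hr1 hr2) (hc1.symm.trans hc2)
    · exact absurd hb hB
    · exact absurd hc' hC
  · exact absurd hb hB
  · exact absurd hc' hC

lemma deg1_std_small (hm : m ≤ 2) (hA : ¬A) (hB : ¬B) : Deg1 (stdG m A B C) := by
  intro v w u h1 h2
  rcases (stdG_adj v w).mp h1 with ⟨-, ⟨ha, -⟩ | ⟨hb, -⟩ | ⟨-, hr1, hc1⟩⟩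
  · exact absurd ha hA
  · exact absurd hb hB
  · rcases (stdG_adj v u).mp h2 with ⟨-, ⟨ha, -⟩ | ⟨hb, -⟩ | ⟨-, hr2, hc2⟩⟩
    · exact absurd ha hA
    · exact absurd hb hB
    · exact Prod.ext (fin2_ne_ne hr1 hr2)
        (fin_eq_of_le_two hm (fun h => hc1 h.symm) (fun h => hc2 h.symm))

lemma ne_of_fst_ne {α β : Type*} {x y : α × β} (h : x.1 ≠ y.1) : x ≠ y :=
  fun hc => h (congrArg Prod.fst hc)

lemma ne_of_snd_ne {α β : Type*} {x y : α × β} (h : x.2 ≠ y.2) : x ≠ y :=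
  fun hc => h (congrArg Prod.snd hc)

lemma fin2_01 : (0 : Fin 2) ≠ 1 := by decide
lemma fin2_10 : (1 : Fin 2) ≠ 0 := by decide

lemma notdeg1_std_AB (hm2 : 2 ≤ m) (hA : A) (hB : B) : ¬ Deg1 (stdG m A B C) := by
  intro hd
  have hc01 : (⟨0, by omega⟩ : Fin m) ≠ ⟨1, by omega⟩ := by simp [Fin.ext_iff]
  have h1 : (stdG m A B C).Adj (0, ⟨0, by omega⟩) (1, ⟨0, by omega⟩) :=
    (stdG_adj _ _).mpr ⟨ne_of_fst_ne fin2_01, Or.inl ⟨hA, fin2_01, rfl⟩⟩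
  have h2 : (stdG m A B C).Adj (0, ⟨0, by omega⟩) (0, ⟨1, by omega⟩) :=
    (stdG_adj _ _).mpr ⟨ne_of_snd_ne hc01, Or.inr (Or.inl ⟨hB, rfl, hc01⟩)⟩
  exact fin2_10 (congrArg Prod.fst (hd _ _ _ h1 h2))

lemma notdeg1_std_CB (hm2 : 2 ≤ m) (hC : C) (hB : B) : ¬ Deg1 (stdG m A B C) := by
  intro hd
  have hc01 : (⟨0, by omega⟩ : Fin m) ≠ ⟨1, by omega⟩ := by simp [Fin.ext_iff]
  have h1 : (stdG m A B C).Adj (0, ⟨0, by omega⟩) (1, ⟨1, by omega⟩) :=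
    (stdG_adj _ _).mpr ⟨ne_of_fst_ne fin2_01, Or.inr (Or.inr ⟨hC, fin2_01, hc01⟩)⟩
  have h2 : (stdG m A B C).Adj (0, ⟨0, by omega⟩) (0, ⟨1, by omega⟩) :=
    (stdG_adj _ _).mpr ⟨ne_of_snd_ne hc01, Or.inr (Or.inl ⟨hB, rfl, hc01⟩)⟩
  exact fin2_10 (congrArg Prod.fst (hd _ _ _ h1 h2))

lemma notdeg1_std_C3 (hm3 : 3 ≤ m) (hC : C) : ¬ Deg1 (stdG m A B C) := by
  intro hd
  have hc12 : (⟨1, by omega⟩ : Fin m) ≠ ⟨2, by omega⟩ := by simp [Fin.ext_iff]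
  have hc01 : (⟨0, by omega⟩ : Fin m) ≠ ⟨1, by omega⟩ := by simp [Fin.ext_iff]
  have hc02 : (⟨0, by omega⟩ : Fin m) ≠ ⟨2, by omega⟩ := by simp [Fin.ext_iff]
  have h1 : (stdG m A B C).Adj (0, ⟨0, by omega⟩) (1, ⟨1, by omega⟩) :=
    (stdG_adj _ _).mpr ⟨ne_of_fst_ne fin2_01, Or.inr (Or.inr ⟨hC, fin2_01, hc01⟩)⟩
  have h2 : (stdG m A B C).Adj (0, ⟨0, by omega⟩) (1, ⟨2, by omega⟩) :=
    (stdG_adj _ _).mpr ⟨ne_of_fst_ne fin2_01, Or.inr (Or.inr ⟨hC, fin2_01, hc02⟩)⟩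
  exact hc12 (congrArg Prod.snd (hd _ _ _ h1 h2))

lemma hastri_std_B3 (hm3 : 3 ≤ m) (hB : B) : HasTri (stdG m A B C) := by
  have hd : ∀ (x y : ℕ) (hx : x < m) (hy : y < m), x ≠ y →
      (stdG m A B C).Adj (0, ⟨x, hx⟩) (0, ⟨y, hy⟩) := by
    intro x y hx hy hxy
    have hne : (⟨x, hx⟩ : Fin m) ≠ ⟨y, hy⟩ := by simp [Fin.ext_iff, hxy]
    exact (stdG_adj _ _).mpr ⟨ne_of_snd_ne hne, Or.inr (Or.inl ⟨hB, rfl, hne⟩)⟩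
  exact ⟨(0, ⟨0, by omega⟩), (0, ⟨1, by omega⟩), (0, ⟨2, by omega⟩),
    hd 0 1 (by omega) (by omega) (by omega),
    hd 1 2 (by omega) (by omega) (by omega),
    hd 0 2 (by omega) (by omega) (by omega)⟩

lemma trifree_std (hA : ¬A) (hB : ¬B) : ¬ HasTri (stdG m A B C) := by
  rintro ⟨v, w, u, h1, h2, h3⟩
  have hr : ∀ x y : Fin 2 × Fin m, (stdG m A B C).Adj x y → x.1 ≠ y.1 := by
    intro x y hxy
    rcases (stdG_adj x y).mp hxy with ⟨-, ⟨ha, -⟩ | ⟨hb, -⟩ | ⟨-, hrr, -⟩⟩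
    · exact absurd ha hA
    · exact absurd hb hB
    · exact hrr
  exact hr v u h3 (fin2_ne_ne (Ne.symm (hr v w h1)) (hr w u h2))

lemma edgenotri_std_A (hm : 0 < m) (hA : A) (hC : ¬C) : EdgeNoTri (stdG m A B C) := by
  set c0 : Fin m := ⟨0, hm⟩
  refine ⟨(0, c0), (1, c0),
    (stdG_adj _ _).mpr ⟨ne_of_fst_ne fin2_01, Or.inl ⟨hA, fin2_01, rfl⟩⟩, ?_⟩
  rintro u ⟨h1, h2⟩
  rcases (stdG_adj _ _).mp h1 with ⟨-, ⟨-, hr1, hc1⟩ | ⟨-, hr1, hc1⟩ | ⟨hc', -⟩⟩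
  · -- u = (1, c0), so h2 is a self-loop
    have hu : u = (1, c0) := by
      rw [Prod.ext_iff]
      exact ⟨fin2_eq_one_of_ne (fun h => hr1 h.symm), hc1.symm⟩
    rw [hu] at h2
    exact (stdG m A B C).irrefl h2
  · -- u has row 0 and column ≠ c0
    rcases (stdG_adj _ _).mp h2 with ⟨-, ⟨-, hr2, hc2⟩ | ⟨-, hr2, -⟩ | ⟨hc', -⟩⟩
    · exact hc1 hc2
    · exact fin2_01 (hr1.trans hr2.symm)
    · exact absurd hc' hC
  · exact absurd hc' hC

lemma no_edgenotri_std (hm3 : 3 ≤ m) (hA : ¬A) (hB : B) (hC : C) :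
    ¬ EdgeNoTri (stdG m A B C) := by
  rintro ⟨v, w, hvw, hno⟩
  rcases (stdG_adj v w).mp hvw with ⟨-, ⟨ha, -⟩ | ⟨-, hrow, hcol⟩ | ⟨-, hrow, hcol⟩⟩
  · exact hA ha
  · -- same row, different columns
    obtain ⟨l, hl1, hl2⟩ := exists_third hm3 v.2 w.2
    apply hno (Equiv.swap 0 1 v.1, l)
    have hrv : v.1 ≠ (Equiv.swap 0 1 v.1) := fun h => fin2_swap_ne v.1 h.symm
    have hrw : w.1 ≠ (Equiv.swap 0 1 v.1) := by rw [← hrow]; exact hrv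
    constructor
    · exact (stdG_adj _ _).mpr ⟨ne_of_fst_ne hrv,
        Or.inr (Or.inr ⟨hC, hrv, fun h => hl1 h.symm⟩)⟩
    · exact (stdG_adj _ _).mpr ⟨ne_of_fst_ne hrw,
        Or.inr (Or.inr ⟨hC, hrw, fun h => hl2 h.symm⟩)⟩
  · -- different rows, different columns
    obtain ⟨l, hl1, hl2⟩ := exists_third hm3 v.2 w.2
    apply hno (w.1, l)
    constructor
    · exact (stdG_adj _ _).mpr ⟨ne_of_fst_ne hrow,
        Or.inr (Or.inr ⟨hC, hrow, fun h => hl1 h.symm⟩)⟩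
    · exact (stdG_adj _ _).mpr ⟨ne_of_snd_ne (fun h => hl2 h.symm),
        Or.inr (Or.inl ⟨hB, rfl, fun h => hl2 h.symm⟩)⟩

end StdFacts
section Select

variable {m : ℕ} {A B C : Prop}

lemma select_matching (hm2 : 2 ≤ m) (hAC : A ↔ ¬C)
    (h : Nonempty (stdG m A B C ≃g matching m)) : ¬B ∧ (A ∨ (m = 2 ∧ ¬A ∧ C)) := by
  obtain ⟨E⟩ := h
  have hdm : Deg1 (matching m) := by
    rw [matching_eq_std]
    exact deg1_std_matchingLike not_false not_false
  have hd : Deg1 (stdG m A B C) := Deg1.transfer E hdm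
  by_cases hA : A
  · have hC : ¬C := hAC.mp hA
    have hB : ¬B := fun hb => notdeg1_std_AB hm2 hA hb hd
    exact ⟨hB, Or.inl hA⟩
  · have hC : C := by
      by_contra hc
      exact hA (hAC.mpr hc)
    have hB : ¬B := fun hb => notdeg1_std_CB hm2 hC hb hd
    have hm2' : m = 2 := by
      by_contra hne
      exact notdeg1_std_C3 (by omega) hC hd
    exact ⟨hB, Or.inr ⟨hm2', hA, hC⟩⟩

lemma select_prism (hm2 : 2 ≤ m) (hAC : A ↔ ¬C)
    (h : Nonempty (stdG m A B C ≃g prism m)) : B ∧ (A ∨ (m = 2 ∧ ¬A ∧ C)) := by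
  obtain ⟨E⟩ := h
  have hm : 0 < m := by omega
  have hndp : ¬ Deg1 (prism m) := by
    rw [prism_eq_std]
    exact notdeg1_std_AB hm2 trivial trivial
  have hEnTp : EdgeNoTri (prism m) := by
    rw [prism_eq_std]
    exact edgenotri_std_A hm trivial not_false
  have hnd : ¬ Deg1 (stdG m A B C) := fun hd => hndp (Deg1.transfer E.symm hd)
  have hB : B := by
    by_contra hB
    by_cases hA : A
    · exact hnd (deg1_std_matchingLike hB (hAC.mp hA))
    · have hC : C := by
        by_contra hc
        exact hA (hAC.mpr hc)
      by_cases hm3 : 3 ≤ m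
      · have hTrip : HasTri (prism m) := by
          rw [prism_eq_std]
          exact hastri_std_B3 hm3 trivial
        exact trifree_std hA hB (HasTri.transfer E.symm hTrip)
      · exact hnd (deg1_std_small (by omega) hA hB)
  refine ⟨hB, ?_⟩
  by_cases hA : A
  · exact Or.inl hA
  · have hC : C := by
      by_contra hc
      exact hA (hAC.mpr hc)
    have hm2' : m = 2 := by
      by_contra hne
      exact no_edgenotri_std (by omega) hA hB hC (EdgeNoTri.transfer E.symm hEnTp)
    exact Or.inr ⟨hm2', hA, hC⟩

lemma select_compmatching (hm2 : 2 ≤ m) (hAC : A ↔ ¬C)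
    (h : Nonempty (stdG m A B C ≃g (matching m)ᶜ)) : B ∧ (¬A ∨ (m = 2 ∧ A ∧ ¬C)) := by
  obtain ⟨E⟩ := h
  have hm : 0 < m := by omega
  have hndc : ¬ Deg1 ((matching m)ᶜ) := by
    rw [matchingC_eq_std]
    exact notdeg1_std_CB hm2 trivial trivial
  have hnd : ¬ Deg1 (stdG m A B C) := fun hd => hndc (Deg1.transfer E.symm hd)
  have hB : B := by
    by_contra hB
    by_cases hA : A
    · exact hnd (deg1_std_matchingLike hB (hAC.mp hA))
    · by_cases hm3 : 3 ≤ m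
      · have hTric : HasTri ((matching m)ᶜ) := by
          rw [matchingC_eq_std]
          exact hastri_std_B3 hm3 trivial
        exact trifree_std hA hB (HasTri.transfer E.symm hTric)
      · exact hnd (deg1_std_small (by omega) hA hB)
  refine ⟨hB, ?_⟩
  by_cases hA : A
  · have hC : ¬C := hAC.mp hA
    have hm2' : m = 2 := by
      by_contra hne
      have hNoEnT : ¬ EdgeNoTri ((matching m)ᶜ) := by
        rw [matchingC_eq_std]
        exact no_edgenotri_std (by omega) not_false trivial trivial
      exact hNoEnT (EdgeNoTri.transfer E (edgenotri_std_A hm hA hC))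
    exact Or.inr ⟨hm2', hA, hC⟩
  · exact Or.inl hA

lemma select_compprism (hm2 : 2 ≤ m) (hAC : A ↔ ¬C)
    (h : Nonempty (stdG m A B C ≃g (prism m)ᶜ)) : ¬B ∧ (¬A ∨ (m = 2 ∧ A ∧ ¬C)) := by
  obtain ⟨E⟩ := h
  have hm : 0 < m := by omega
  have hTFcp : ¬ HasTri ((prism m)ᶜ) := by
    rw [prismC_eq_std]
    exact trifree_std not_false not_false
  have hB : ¬B := by
    intro hB
    by_cases hm3 : 3 ≤ m
    · exact hTFcp (HasTri.transfer E (hastri_std_B3 hm3 hB))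
    · have hdcp : Deg1 ((prism m)ᶜ) := by
        rw [prismC_eq_std]
        exact deg1_std_small (by omega) not_false not_false
      have hd : Deg1 (stdG m A B C) := Deg1.transfer E hdcp
      by_cases hA : A
      · exact notdeg1_std_AB hm2 hA hB hd
      · have hC : C := by
          by_contra hc
          exact hA (hAC.mpr hc)
        exact notdeg1_std_CB hm2 hC hB hd
  refine ⟨hB, ?_⟩
  by_cases hA : A
  · have hC : ¬C := hAC.mp hA
    have hm2' : m = 2 := by
      by_contra hne
      have hndcp : ¬ Deg1 ((prism m)ᶜ) := by
        rw [prismC_eq_std]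
        exact notdeg1_std_C3 (by omega) trivial
      exact hndcp (Deg1.transfer E.symm (deg1_std_matchingLike hB hC))
    exact Or.inr ⟨hm2', hA, hC⟩
  · exact Or.inl hA

lemma hasedge_std_one : HasEdge (stdG 1 A B C) ↔ A := by
  constructor
  · rintro ⟨v, w, hvw⟩
    rcases (stdG_adj v w).mp hvw with ⟨-, ⟨ha, -⟩ | ⟨-, -, hc⟩ | ⟨-, -, hc⟩⟩
    · exact ha
    · exact absurd (Subsingleton.elim _ _) hc
    · exact absurd (Subsingleton.elim _ _) hc
  · intro hA
    exact ⟨(0, 0), (1, 0), (stdG_adj _ _).mpr ⟨ne_of_fst_ne fin2_01,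
      Or.inl ⟨hA, fin2_01, rfl⟩⟩⟩

end Select

section QuotRows

variable {m k : ℕ} [NeZero k]

lemma pair_rows (hm : 0 < m) : ∀ α β : QV m k,
    ({α, β} : Set (QV m k)) ∈ quotPart m k (basePower (symPart m)) →
      rowQ m k α ≠ rowQ m k β := by
  intro α β hmem
  obtain ⟨u, hu⟩ := α.exists_rep
  obtain ⟨v, hv⟩ := β.exists_rep
  have hu' : mkQ m k u = α := hu
  have hv' : mkQ m k v = β := hv
  rw [← hu', ← hv'] at hmem ⊢
  exact fun hc => ((mem_quotPart_pair hm u v).mp hmem).2 hc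

end QuotRows
/-- Theorem `prop:graphs_inf`.  Let `Γ` be a finite
vertex-transitive graph on `{1, -1, …, m, -m} × [k]` whose full automorphism group
`G` satisfies `X^k ≤ G ≤ Y ≀ Sym(k)`, where `X = {1} × Sym(m)` and
`Y = ⟨τ⟩ × Sym(m)`, and whose pointwise stabiliser of the complement of `D₁` is
exactly the copy of `X` acting on `D₁`.  Then (1) all the induced subgraphs
`Γ[D_j]` are mutually isomorphic, and `Γ[D₁]` is isomorphic to `m K₂`,
`K_m □ K₂`, or the complement of one of these; (2) `Γ ≅ Inf_{λ,κ}(Γ/X^k, 𝓓/X^k, m)`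
with `(λ,κ) = (1,0), (1,1), (0,1), (0,0)` according to the four cases; and (3) the
quotient graph `Γ/X^k` admits no transposition preserving `𝓓/X^k` as an
automorphism. -/
theorem statement_18 (m k : ℕ) [NeZero k]
    (Γ : SimpleGraph ((Fin 2 × Fin m) × Fin k)) (hvt : IsVertexTransitive Γ)
    (hlow : basePower (symPart m) ≤ autGroup Γ)
    (hhigh : autGroup Γ ≤ wreathProduct (flipSym m) (⊤ : Subgroup (Equiv.Perm (Fin k))))
    (hstab : autGroup Γ ⊓ fixAway (0 : Fin k) = atCoord (0 : Fin k) (symPart m)) :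
    -- (1)
    ((∀ j j' : Fin k, Nonempty (Γ.induce (Dblock m k j) ≃g Γ.induce (Dblock m k j'))) ∧
      (Nonempty (Γ.induce (Dblock m k 0) ≃g matching m) ∨
       Nonempty (Γ.induce (Dblock m k 0) ≃g prism m) ∨
       Nonempty (Γ.induce (Dblock m k 0) ≃g (matching m)ᶜ) ∨
       Nonempty (Γ.induce (Dblock m k 0) ≃g (prism m)ᶜ))) ∧
    -- (2)
    ((Nonempty (Γ.induce (Dblock m k 0) ≃g matching m) →
        Nonempty (Γ ≃g infGraph (quotGraph Γ (basePower (symPart m)))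
          (quotPart m k (basePower (symPart m))) m 1 0)) ∧
     (Nonempty (Γ.induce (Dblock m k 0) ≃g prism m) →
        Nonempty (Γ ≃g infGraph (quotGraph Γ (basePower (symPart m)))
          (quotPart m k (basePower (symPart m))) m 1 1)) ∧
     (Nonempty (Γ.induce (Dblock m k 0) ≃g (matching m)ᶜ) →
        Nonempty (Γ ≃g infGraph (quotGraph Γ (basePower (symPart m)))
          (quotPart m k (basePower (symPart m))) m 0 1)) ∧
     (Nonempty (Γ.induce (Dblock m k 0) ≃g (prism m)ᶜ) →
        Nonempty (Γ ≃g infGraph (quotGraph Γ (basePower (symPart m)))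
          (quotPart m k (basePower (symPart m))) m 0 0))) ∧
    -- (3)
    ¬ ∃ e : quotGraph Γ (basePower (symPart m)) ≃g quotGraph Γ (basePower (symPart m)),
        (∃ a b, a ≠ b ∧ e a = b ∧ e b = a ∧ ∀ q, q ≠ a → q ≠ b → e q = q) ∧
        ∀ S ∈ quotPart m k (basePower (symPart m)),
          (fun q => e q) '' S ∈ quotPart m k (basePower (symPart m)) := by
  classical
  rcases Nat.eq_zero_or_pos m with rfl | hm
  · -- degenerate case m = 0 : everything is empty
    haveI hEV : IsEmpty ((Fin 2 × Fin 0) × Fin k) := ⟨fun v => v.1.2.elim0⟩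
    haveI hE2 : IsEmpty (Fin 2 × Fin 0) := ⟨fun v => v.2.elim0⟩
    haveI hEQ : IsEmpty (QV 0 k × Fin 0) := ⟨fun v => v.2.elim0⟩
    refine ⟨⟨?_, ?_⟩, ⟨?_, ?_, ?_, ?_⟩, ?_⟩
    · intro j j'
      haveI : IsEmpty ↥(Dblock 0 k j) := ⟨fun v => v.1.1.2.elim0⟩
      haveI : IsEmpty ↥(Dblock 0 k j') := ⟨fun v => v.1.1.2.elim0⟩
      exact ⟨isoOfIsEmpty _ _⟩
    · left
      haveI : IsEmpty ↥(Dblock 0 k 0) := ⟨fun v => v.1.1.2.elim0⟩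
      exact ⟨isoOfIsEmpty _ _⟩
    · exact fun _ => ⟨isoOfIsEmpty _ _⟩
    · exact fun _ => ⟨isoOfIsEmpty _ _⟩
    · exact fun _ => ⟨isoOfIsEmpty _ _⟩
    · exact fun _ => ⟨isoOfIsEmpty _ _⟩
    · rintro ⟨e, ⟨a, b, -, -, -, -⟩, -⟩
      obtain ⟨v, -⟩ := a.exists_rep
      exact v.1.2.elim0
  · obtain ⟨iso0⟩ := induce_D0_iso hm hvt hhigh hlow
    refine ⟨⟨induce_blocks_iso hm hvt hhigh, ?_⟩, ⟨?_, ?_, ?_, ?_⟩,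
      no_transposition hm hvt hhigh hlow hstab⟩
    case refine_1 =>
      -- part (1b)
      by_cases hm2 : 2 ≤ m
      · have hAC := propA_iff_not_propC hm2 hvt hhigh hlow hstab
        by_cases hA : PropA Γ <;> by_cases hB : PropB Γ
        · exact Or.inr (Or.inl ⟨iso0.trans (isoOfEq ((stdG_congr (iff_of_true hA trivial)
            (iff_of_true hB trivial) (iff_false_intro (hAC.mp hA))).trans
            (prism_eq_std m).symm))⟩)
        · exact Or.inl ⟨iso0.trans (isoOfEq ((stdG_congr (iff_of_true hA trivial)
            (iff_false_intro hB) (iff_false_intro (hAC.mp hA))).trans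
            (matching_eq_std m).symm))⟩
        · have hC : PropC Γ := by
            by_contra hc
            exact hA (hAC.mpr hc)
          exact Or.inr (Or.inr (Or.inl ⟨iso0.trans (isoOfEq ((stdG_congr
            (iff_false_intro hA) (iff_of_true hB trivial) (iff_of_true hC trivial)).trans
            (matchingC_eq_std m).symm))⟩))
        · have hC : PropC Γ := by
            by_contra hc
            exact hA (hAC.mpr hc)
          exact Or.inr (Or.inr (Or.inr ⟨iso0.trans (isoOfEq ((stdG_congr
            (iff_false_intro hA) (iff_false_intro hB) (iff_of_true hC trivial)).trans
            (prismC_eq_std m).symm))⟩))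
      · -- m = 1
        have hm1 : m = 1 := by omega
        subst hm1
        by_cases hA : PropA Γ
        · exact Or.inl ⟨iso0.trans (isoOfEq ((stdG_one _ _ _ False False).trans
            ((stdG_congr (iff_of_true hA trivial) Iff.rfl Iff.rfl).trans
            (matching_eq_std 1).symm)))⟩
        · exact Or.inr (Or.inr (Or.inl ⟨iso0.trans (isoOfEq ((stdG_one _ _ _ True True).trans
            ((stdG_congr (iff_false_intro hA) Iff.rfl Iff.rfl).trans
            (matchingC_eq_std 1).symm)))⟩))
    case refine_2 =>
      -- matching case : (λ,κ) = (1,0)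
      intro h
      by_cases hm2 : 2 ≤ m
      · have hAC := propA_iff_not_propC hm2 hvt hhigh hlow hstab
        have hsel := select_matching hm2 hAC ⟨iso0.symm.trans h.some⟩
        rcases hsel.2 with hA | ⟨hm2', hA, hC⟩
        · exact canonical_iso hm hvt hhigh hlow 1 0 (iff_of_true hA rfl)
            (fun _ => iff_of_false (hAC.mp hA) (by decide))
            (fun _ => iff_of_false hsel.1 (by decide))
        · subst hm2'
          obtain ⟨iso1⟩ := canonical_iso hm hvt hhigh hlow 0 0
            (iff_of_false hA (by decide)) (fun _ => iff_of_true hC rfl)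
            (fun _ => iff_of_false hsel.1 (by decide))
          obtain ⟨E2⟩ := infSwap (quotGraph Γ (basePower (symPart 2)))
            (quotPart 2 k (basePower (symPart 2))) (rowQ 2 k) (pair_rows (by omega)) 0
          exact ⟨iso1.trans E2.symm⟩
      · have hm1 : m = 1 := by omega
        subst hm1
        have hA : PropA Γ := by
          have hE : HasEdge (stdG 1 (PropA Γ) (PropB Γ) (PropC Γ)) := by
            have hEm : HasEdge (matching 1) := by
              rw [matching_eq_std]
              exact hasedge_std_one.mpr trivial
            exact HasEdge.transfer (iso0.symm.trans h.some).symm hEm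
          exact hasedge_std_one.mp hE
        exact canonical_iso hm hvt hhigh hlow 1 0 (iff_of_true hA rfl)
          (fun h2 => absurd h2 (by omega)) (fun h2 => absurd h2 (by omega))
    case refine_3 =>
      -- prism case : (λ,κ) = (1,1)
      intro h
      by_cases hm2 : 2 ≤ m
      · have hAC := propA_iff_not_propC hm2 hvt hhigh hlow hstab
        have hsel := select_prism hm2 hAC ⟨iso0.symm.trans h.some⟩
        rcases hsel.2 with hA | ⟨hm2', hA, hC⟩
        · exact canonical_iso hm hvt hhigh hlow 1 1 (iff_of_true hA rfl)
            (fun _ => iff_of_false (hAC.mp hA) (by decide))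
            (fun _ => iff_of_true hsel.1 rfl)
        · subst hm2'
          obtain ⟨iso1⟩ := canonical_iso hm hvt hhigh hlow 0 1
            (iff_of_false hA (by decide)) (fun _ => iff_of_true hC rfl)
            (fun _ => iff_of_true hsel.1 rfl)
          obtain ⟨E2⟩ := infSwap (quotGraph Γ (basePower (symPart 2)))
            (quotPart 2 k (basePower (symPart 2))) (rowQ 2 k) (pair_rows (by omega)) 1
          exact ⟨iso1.trans E2.symm⟩
      · have hm1 : m = 1 := by omega
        subst hm1
        have hA : PropA Γ := by
          have hE : HasEdge (stdG 1 (PropA Γ) (PropB Γ) (PropC Γ)) := by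
            have hEm : HasEdge (prism 1) := by
              rw [prism_eq_std]
              exact hasedge_std_one.mpr trivial
            exact HasEdge.transfer (iso0.symm.trans h.some).symm hEm
          exact hasedge_std_one.mp hE
        exact canonical_iso hm hvt hhigh hlow 1 1 (iff_of_true hA rfl)
          (fun h2 => absurd h2 (by omega)) (fun h2 => absurd h2 (by omega))
    case refine_4 =>
      -- complement of matching : (λ,κ) = (0,1)
      intro h
      by_cases hm2 : 2 ≤ m
      · have hAC := propA_iff_not_propC hm2 hvt hhigh hlow hstab
        have hsel := select_compmatching hm2 hAC ⟨iso0.symm.trans h.some⟩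
        rcases hsel.2 with hA | ⟨hm2', hA, hC⟩
        · have hC : PropC Γ := by
            by_contra hc
            exact hA (hAC.mpr hc)
          exact canonical_iso hm hvt hhigh hlow 0 1 (iff_of_false hA (by decide))
            (fun _ => iff_of_true hC rfl) (fun _ => iff_of_true hsel.1 rfl)
        · subst hm2'
          obtain ⟨iso1⟩ := canonical_iso hm hvt hhigh hlow 1 1
            (iff_of_true hA rfl) (fun _ => iff_of_false hC (by decide))
            (fun _ => iff_of_true hsel.1 rfl)
          obtain ⟨E2⟩ := infSwap (quotGraph Γ (basePower (symPart 2)))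
            (quotPart 2 k (basePower (symPart 2))) (rowQ 2 k) (pair_rows (by omega)) 1
          exact ⟨iso1.trans E2⟩
      · have hm1 : m = 1 := by omega
        subst hm1
        have hA : ¬ PropA Γ := by
          intro hA
          have hE : HasEdge ((matching 1)ᶜ) := HasEdge.transfer (iso0.symm.trans h.some)
            (hasedge_std_one.mpr hA)
          rw [matchingC_eq_std] at hE
          exact hasedge_std_one.mp hE
        exact canonical_iso hm hvt hhigh hlow 0 1 (iff_of_false hA (by decide))
          (fun h2 => absurd h2 (by omega)) (fun h2 => absurd h2 (by omega))
    case refine_5 =>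
      -- complement of prism : (λ,κ) = (0,0)
      intro h
      by_cases hm2 : 2 ≤ m
      · have hAC := propA_iff_not_propC hm2 hvt hhigh hlow hstab
        have hsel := select_compprism hm2 hAC ⟨iso0.symm.trans h.some⟩
        rcases hsel.2 with hA | ⟨hm2', hA, hC⟩
        · have hC : PropC Γ := by
            by_contra hc
            exact hA (hAC.mpr hc)
          exact canonical_iso hm hvt hhigh hlow 0 0 (iff_of_false hA (by decide))
            (fun _ => iff_of_true hC rfl) (fun _ => iff_of_false hsel.1 (by decide))
        · subst hm2'
          obtain ⟨iso1⟩ := canonical_iso hm hvt hhigh hlow 1 0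
            (iff_of_true hA rfl) (fun _ => iff_of_false hC (by decide))
            (fun _ => iff_of_false hsel.1 (by decide))
          obtain ⟨E2⟩ := infSwap (quotGraph Γ (basePower (symPart 2)))
            (quotPart 2 k (basePower (symPart 2))) (rowQ 2 k) (pair_rows (by omega)) 0
          exact ⟨iso1.trans E2⟩
      · have hm1 : m = 1 := by omega
        subst hm1
        have hA : ¬ PropA Γ := by
          intro hA
          have hE : HasEdge ((prism 1)ᶜ) := HasEdge.transfer (iso0.symm.trans h.some)
            (hasedge_std_one.mpr hA)
          rw [prismC_eq_std] at hE
          exact hasedge_std_one.mp hE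
        exact canonical_iso hm hvt hhigh hlow 0 0 (iff_of_false hA (by decide))
          (fun h2 => absurd h2 (by omega)) (fun h2 => absurd h2 (by omega))
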